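/- arXiv:2011.07716 — 5 statements merged into one kernel-verified Lean document; each statement's English description precedes it below -/
import Mathlib

section
/- Let G be a finite group, R a commutative ring, S a G-Galois algebra over R (i.e., S is an étale R-algebra with G-action making Spec S an étale G-torsor over Spec R), and x a normal element of S. Then the group U_G(R) = {u = Σ_g a_g[g] ∈ R[G]^× : Σ_g a_g = 1} acts freely and transitively on the set of normal elements of S: every normal element of S is of the form Σ_g a_g g(x) for a unique u = Σ_g a_g[g] ∈ U_G(R). -/
open scoped TensorProduct

/-- The canonical map `S ⊗[R] S → (G → S)`, `s ⊗ t ↦ (g ↦ s * g(t))`.  A `G`-algebra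
`S/R` is an étale `G`-torsor (a `G`-Galois algebra) precisely when this map is bijective
and the `G`-invariants of `S` are `R`. -/
noncomputable def galoisMap (R S : Type*) [CommRing R] [CommRing S] [Algebra R S]
    (G : Type*) [Group G] (ρ : G →* (S ≃ₐ[R] S)) : S ⊗[R] S →ₗ[R] (G → S) :=
  TensorProduct.lift <| LinearMap.mk₂ R (fun s t => fun g => s * ρ g t)
    (fun s s' t => by funext g; simp [add_mul])
    (fun c s t => by funext g; simp [smul_mul_assoc])
    (fun s t t' => by funext g; simp [map_add, mul_add])
    (fun c s t => by funext g; simp [map_smul, mul_smul_comm])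

/-- For a `G`-Galois algebra `S/R` with normal element `x`, the group
`U_G(R) = {u = Σ a_g [g] ∈ R[G]ˣ : Σ a_g = 1}` acts freely and transitively on the
normal elements of `S`: every normal element `y` of `S` equals `Σ a_g g(x)` for a
unique `u = Σ a_g [g] ∈ U_G(R)`. -/
theorem unit_group_acts_simply_transitively_on_normal_elements
    (R S : Type*) [CommRing R] [CommRing S] [Algebra R S]
    (G : Type*) [Group G] [Fintype G] (ρ : G →* (S ≃ₐ[R] S))
    (hGinv : ∀ s : S, (∀ g : G, ρ g s = s) → s ∈ (algebraMap R S).range)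
    (hgal : Function.Bijective (galoisMap R S G ρ))
    (x : S) (hx1 : Algebra.trace R S x = 1)
    (hxb : ∃ b : Module.Basis G R S, ∀ g : G, b g = ρ g x)
    (y : S) (hy1 : Algebra.trace R S y = 1)
    (hyb : ∃ b : Module.Basis G R S, ∀ g : G, b g = ρ g y) :
    ∃! a : G → R,
      (∑ g : G, a g = 1) ∧
      IsUnit (∑ g : G, MonoidAlgebra.single g (a g) : MonoidAlgebra R G) ∧
      y = ∑ g : G, a g • ρ g x := by
  obtain ⟨b, hb⟩ := hxb
  obtain ⟨c, hc⟩ := hyb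
  set a : G → R := fun g => b.repr y g with ha
  -- uniqueness of the coefficients
  have huniq : ∀ a' : G → R, y = ∑ g : G, a' g • ρ g x → a' = a := by
    intro a' h
    have h' : y = ∑ g : G, a' g • b g := by simpa [hb] using h
    have h2 : ⇑(b.repr y) = a' := by rw [h', b.repr_sum_self]
    funext g
    rw [ha]
    exact (congrFun h2 g).symm
  -- the decomposition
  have hdec : y = ∑ g : G, a g • ρ g x := by
    conv_lhs => rw [← b.sum_repr y]
    simp [hb, ha]
  -- trace invariance
  have htr : ∀ g : G, Algebra.trace R S (ρ g x) = 1 := fun g => by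
    rw [Algebra.trace_eq_of_algEquiv (ρ g) x, hx1]
  have hsum : ∑ g : G, a g = 1 := by
    have := congrArg (Algebra.trace R S) hdec
    rw [hy1, map_sum] at this
    simp only [map_smul, htr, smul_eq_mul, mul_one] at this
    exact this.symm
  -- the element `u` and its unit property
  set u : MonoidAlgebra R G := ∑ g : G, MonoidAlgebra.single g (a g) with hu
  set φ : (G →₀ R) →ₗ[R] S := Finsupp.linearCombination R (fun g : G => ρ g x) with hφ
  set ψ : (G →₀ R) →ₗ[R] S := Finsupp.linearCombination R (fun g : G => ρ g y) with hψ
  have hφb : φ = Finsupp.linearCombination R ⇑b := by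
    rw [hφ]
    exact congrArg (fun f : G → S => Finsupp.linearCombination R f)
      (funext fun g => (hb g).symm)
  have hψc : ψ = Finsupp.linearCombination R ⇑c := by
    rw [hψ]
    exact congrArg (fun f : G → S => Finsupp.linearCombination R f)
      (funext fun g => (hc g).symm)
  have hφbij : Function.Bijective φ := by
    have h : ⇑φ = ⇑b.repr.symm := by
      funext v; rw [b.repr_symm_apply, hφb]
    rw [h]; exact b.repr.symm.bijective
  have hψbij : Function.Bijective ψ := by
    have h : ⇑ψ = ⇑c.repr.symm := by
      funext v; rw [c.repr_symm_apply, hψc]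
    rw [h]; exact c.repr.symm.bijective
  have hkey0 : ∀ (h : G) (r : R), φ (MonoidAlgebra.single h r * u).coeff = ψ (MonoidAlgebra.single h r).coeff := by
    intro h r
    have h1 : MonoidAlgebra.single h r * u
        = ∑ g : G, MonoidAlgebra.single (h * g) (r * a g) := by
      rw [hu, Finset.mul_sum]
      simp [MonoidAlgebra.single_mul_single]
    have h2 : (ρ h) y = ∑ g : G, a g • ρ (h * g) x := by
      conv_lhs => rw [hdec]
      simp [map_sum, map_mul, AlgEquiv.mul_apply]
    rw [h1, MonoidAlgebra.coeff_sum, map_sum, hψ]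
    simp only [hφ, MonoidAlgebra.coeff_single, Finsupp.linearCombination_single, h2, Finset.smul_sum, smul_smul]
  have hkey : ∀ w : MonoidAlgebra R G, φ (w * u).coeff = ψ w.coeff := by
    intro w
    induction w using MonoidAlgebra.induction_linear with
    | zero => simp
    | add w1 w2 hw1 hw2 => rw [add_mul, MonoidAlgebra.coeff_add, MonoidAlgebra.coeff_add, map_add, map_add, hw1, hw2]
    | single h r => exact hkey0 h r
  -- right multiplication by `u` is bijective
  have hru : Function.Bijective (fun w : MonoidAlgebra R G => w * u) := by
    constructor
    · intro w1 w2 h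
      simp only at h
      apply MonoidAlgebra.coeff_injective
      apply hψbij.1
      rw [← hkey, ← hkey, h]
    · intro z
      obtain ⟨w, hw⟩ := hψbij.2 (φ z.coeff)
      refine ⟨MonoidAlgebra.ofCoeff w, MonoidAlgebra.coeff_injective (hφbij.1 ?_)⟩
      rw [hkey]
      exact hw
  obtain ⟨v, hv⟩ := hru.2 1
  have hv' : v * u = 1 := hv
  have huv : u * v = 1 := by
    apply hru.1
    show (u * v) * u = 1 * u
    rw [mul_assoc, hv', mul_one, one_mul]
  exact ⟨a, ⟨hsum, ⟨⟨u, v, huv, hv'⟩, rfl⟩, hdec⟩, fun a' h' => huniq a' h'.2.2⟩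
end

section
/- Let K be a number field, T an order of K, and I a nonzero fractional T-ideal. If P is a projective (equivalently, invertible) fractional T-ideal, then dis(P·I) = dis(I), where dis(J) = N_{O_K}(O_K J)/N_T(J). -/
set_option synthInstance.maxHeartbeats 1000000
set_option maxHeartbeats 1000000

/-- Generalized index `[A : B]` of two sublattices of `K`, valued in `ℚ`:
`[A : B] = [A : A ∩ B] / [B : A ∩ B]` (as group indices). -/
noncomputable def genIdx {K : Type*} [Field K] (A B : Submodule ℤ K) : ℚ :=
  (AddSubgroup.relIndex B.toAddSubgroup A.toAddSubgroup : ℚ) /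
    (AddSubgroup.relIndex A.toAddSubgroup B.toAddSubgroup : ℚ)

/-- The ring of integers `O_K` of `K` as a `ℤ`-submodule of `K`. -/
noncomputable def intLat (K : Type*) [Field K] : Submodule ℤ K :=
  Subalgebra.toSubmodule (integralClosure ℤ K)

/-- The discrepancy `dis(I) = N_{O_K}(O_K·I) / N_T(I)` of a fractional `T`-ideal `I`,
where `N_T(I) = [T : I]` and `N_{O_K}(O_K I) = [O_K : O_K I]` are generalized indices. -/
noncomputable def discrepancy {K : Type*} [Field K] (T I : Submodule ℤ K) : ℚ :=
  genIdx (intLat K) (intLat K * I) / genIdx T I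

open Pointwise

namespace DiscrepancyAux

set_option linter.unusedSectionVars false
set_option linter.unusedTactic false
set_option linter.unnecessarySimpa false

variable {K : Type*} [Field K] [CharZero K]

def IsLat (A : Submodule ℤ K) : Prop := A.FG ∧ Submodule.span ℚ (A : Set K) = ⊤

theorem exists_int_smul_mem {B : Submodule ℤ K} {x : K}
    (hx : x ∈ Submodule.span ℚ (B : Set K)) : ∃ d : ℤ, d ≠ 0 ∧ (d : K) * x ∈ B := by
  induction hx using Submodule.span_induction with
  | mem y hy => exact ⟨1, one_ne_zero, by simpa using hy⟩
  | zero => exact ⟨1, one_ne_zero, by simp⟩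
  | add y z _ _ hy hz =>
      obtain ⟨a, ha, hay⟩ := hy
      obtain ⟨b, hb, hbz⟩ := hz
      refine ⟨a * b, mul_ne_zero ha hb, ?_⟩
      have h1 : ((a*b : ℤ) : K) * (y + z) = (b:K) * ((a:K)*y) + (a:K)*((b:K)*z) := by
        push_cast; ring
      rw [h1]
      exact Submodule.add_mem _
        (by simpa using B.smul_mem b hay) (by simpa using B.smul_mem a hbz)
  | smul q y _ hy =>
      obtain ⟨a, ha, hay⟩ := hy
      refine ⟨q.den * a, mul_ne_zero (by exact_mod_cast q.den_ne_zero) ha, ?_⟩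
      have h1 : ((q.den * a : ℤ) : K) * (q • y) = (q.num : K) * ((a:K) * y) := by
        push_cast
        rw [Rat.smul_def]
        push_cast
        rw [show ((q.den:K) * a * ((q:K) * y)) = ((q.den : K) * (q:K)) * ((a:K) * y) by ring]
        congr 1
        rw [← Rat.cast_intCast, ← Rat.cast_natCast, ← Rat.cast_mul]
        congr 1
        rw [mul_comm]
        exact_mod_cast Rat.mul_den_eq_num q
      rw [h1]
      simpa using B.smul_mem q.num hay

theorem commensurable {A B : Submodule ℤ K} (hA : A.FG) (hB : Submodule.span ℚ (B : Set K) = ⊤) :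
    ∃ d : ℤ, d ≠ 0 ∧ ∀ a ∈ A, (d : K) * a ∈ B := by
  obtain ⟨s, hs⟩ := hA
  -- for each generator, clear denominators
  have h : ∀ x : K, ∃ d : ℤ, d ≠ 0 ∧ (d:K) * x ∈ B := fun x =>
    exists_int_smul_mem (by rw [hB]; trivial)
  choose f hf0 hfB using h
  refine ⟨∏ x ∈ s, f x, Finset.prod_ne_zero_iff.2 fun x _ => hf0 x, ?_⟩
  intro a ha
  have : a ∈ Submodule.span ℤ (s : Set K) := by rw [hs]; exact ha
  set d : ℤ := ∏ x ∈ s, f x with hd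
  have : ∀ a ∈ Submodule.span ℤ (s : Set K), (d:K) * a ∈ B := by
    intro a ha
    induction ha using Submodule.span_induction with
    | mem y hy =>
        obtain ⟨c, hc⟩ : f y ∣ d := Finset.dvd_prod_of_mem f hy
        have : (d:K) * y = (c:K) * ((f y : K) * y) := by rw [hc]; push_cast; ring
        rw [this]; simpa using B.smul_mem c (hfB y)
    | zero => simp
    | add y z _ _ hy hz => rw [mul_add]; exact B.add_mem hy hz
    | smul n y _ hy =>
        have : (d:K) * (n • y) = n • ((d:K) * y) := by
          rw [zsmul_eq_mul, zsmul_eq_mul]; ring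
        rw [this]; exact B.smul_mem n hy
  exact this a ‹a ∈ Submodule.span ℤ (s : Set K)›


noncomputable def rel (A B : Submodule ℤ K) : ℕ :=
  A.toAddSubgroup.relIndex B.toAddSubgroup

theorem genIdx_def (A B : Submodule ℤ K) : genIdx A B = (rel B A : ℚ) / (rel A B : ℚ) := rfl

theorem tle {A B : Submodule ℤ K} (h : A ≤ B) : A.toAddSubgroup ≤ B.toAddSubgroup :=
  fun _ hx => h hx

theorem smul_mem_iff {x : K} (hx : x ≠ 0) {A : Submodule ℤ K} {z : K} :
    x * z ∈ x • A ↔ z ∈ A := by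
  constructor
  · intro h
    have : x * z ∈ x • (A : Set K) := h
    obtain ⟨a, ha, hax⟩ := this
    have : z = a := (mul_left_cancel₀ hx (show x * a = x * z from hax)).symm
    rwa [this]
  · intro h
    exact Submodule.smul_mem_pointwise_smul z x A h

theorem rel_smul (x : K) (hx : x ≠ 0) (A B : Submodule ℤ K) :
    rel (x • A) (x • B) = rel A B := by
  classical
  set f : K →+ K := AddMonoidHom.mulLeft x with hf
  have hcomap : (x • A).toAddSubgroup.comap f = A.toAddSubgroup := by
    ext z
    simp only [AddSubgroup.mem_comap, hf, AddMonoidHom.coe_mulLeft]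
    exact ⟨fun h => (smul_mem_iff hx).1 h, fun h => (smul_mem_iff hx).2 h⟩
  have hmap : B.toAddSubgroup.map f = (x • B).toAddSubgroup := by
    ext z
    simp only [AddSubgroup.mem_map, hf, AddMonoidHom.coe_mulLeft]
    constructor
    · rintro ⟨b, hb, rfl⟩; exact Submodule.smul_mem_pointwise_smul b x B hb
    · intro h
      obtain ⟨b, hb, hbx⟩ := (h : z ∈ x • (B : Set K))
      exact ⟨b, hb, hbx⟩
  show (x • A).toAddSubgroup.relIndex (x • B).toAddSubgroup = A.toAddSubgroup.relIndex B.toAddSubgroup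
  rw [← hcomap, AddSubgroup.relIndex_comap, hmap]

theorem rel_finite {A : Submodule ℤ K} (hA : A.FG) (d : ℤ) (hd : d ≠ 0) :
    rel ((d : K) • A) A ≠ 0 := by
  have hle : ((d:K) • A).toAddSubgroup ≤ A.toAddSubgroup := by
    intro z hz
    obtain ⟨a, ha, hax⟩ := (hz : z ∈ (d:K) • (A : Set K))
    have : z = d • a := by rw [← hax]; simp [smul_eq_mul, zsmul_eq_mul]
    rw [this]; exact A.smul_mem d ha
  set H := ((d:K) • A).toAddSubgroup.addSubgroupOf A.toAddSubgroup with hH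
  have hfg : AddGroup.FG (A.toAddSubgroup) :=
    (AddGroup.fg_iff_addSubgroup_fg A.toAddSubgroup).2
      ((Submodule.fg_iff_addSubgroup_fg A).1 hA)
  have : Finite (A.toAddSubgroup ⧸ H) := by
    apply AddCommGroup.finite_of_fg_torsion
    intro g
    rw [isOfFinAddOrder_iff_nsmul_eq_zero]
    refine ⟨d.natAbs, Int.natAbs_pos.2 hd, ?_⟩
    induction g using QuotientAddGroup.induction_on with
    | H a =>
      rw [← QuotientAddGroup.mk_nsmul, QuotientAddGroup.eq_zero_iff,
        AddSubgroup.mem_addSubgroupOf]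
      have hmem : (d : K) * (a : K) ∈ (d:K) • A :=
        Submodule.smul_mem_pointwise_smul _ _ _ a.2
      have hcoe : ((d.natAbs • a : A.toAddSubgroup) : K) = (d.natAbs : ℤ) • (a : K) := by
        rw [natCast_zsmul]; rfl
      show ((d.natAbs • a : A.toAddSubgroup) : K) ∈ (d:K) • A
      rw [hcoe]
      rcases Int.natAbs_eq d with h | h
      · rw [← h, zsmul_eq_mul]; exact hmem
      · have : (d.natAbs : ℤ) = -d := by omega
        rw [this, zsmul_eq_mul]
        push_cast
        rw [neg_mul, ← neg_mul]
        have := ((d:K) • A).neg_mem hmem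
        simpa using this
  exact AddSubgroup.index_ne_zero_of_finite

theorem rel_ne_zero {A B : Submodule ℤ K} (hA : IsLat A) (hB : IsLat B) : rel B A ≠ 0 := by
  obtain ⟨d, hd, hdAB⟩ := commensurable hA.1 hB.2
  have hle : ((d:K) • A).toAddSubgroup ≤ B.toAddSubgroup := by
    intro z hz
    obtain ⟨a, ha, hax⟩ := (hz : z ∈ (d:K) • (A : Set K))
    rw [← hax]; exact hdAB a ha
  intro h0
  exact rel_finite hA.1 d hd
    (Nat.eq_zero_of_zero_dvd (h0 ▸ AddSubgroup.relIndex_dvd_of_le_left A.toAddSubgroup hle))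


/-- key : compute `genIdx` via a common finite-index sublattice. -/
theorem genIdx_eq_div {D A B : Submodule ℤ K} (hDA : D ≤ A) (hDB : D ≤ B)
    (h1 : rel D A ≠ 0) (h2 : rel D B ≠ 0) :
    genIdx A B = (rel D A : ℚ) / (rel D B : ℚ) := by
  have hD : D.toAddSubgroup ≤ A.toAddSubgroup ⊓ B.toAddSubgroup :=
    le_inf (tle hDA) (tle hDB)
  simp only [rel] at *
  set m : ℕ := D.toAddSubgroup.relIndex (A.toAddSubgroup ⊓ B.toAddSubgroup) with hm
  have e1 : m * B.toAddSubgroup.relIndex A.toAddSubgroup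
      = D.toAddSubgroup.relIndex A.toAddSubgroup := by
    have := AddSubgroup.relIndex_mul_relIndex D.toAddSubgroup
      (A.toAddSubgroup ⊓ B.toAddSubgroup) A.toAddSubgroup hD inf_le_left
    rw [← this]
    congr 1
    rw [inf_comm]
    exact (AddSubgroup.inf_relIndex_right B.toAddSubgroup A.toAddSubgroup).symm
  have e2 : m * A.toAddSubgroup.relIndex B.toAddSubgroup
      = D.toAddSubgroup.relIndex B.toAddSubgroup := by
    have := AddSubgroup.relIndex_mul_relIndex D.toAddSubgroup
      (A.toAddSubgroup ⊓ B.toAddSubgroup) B.toAddSubgroup hD inf_le_right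
    rw [← this]
    congr 1
    exact (AddSubgroup.inf_relIndex_right A.toAddSubgroup B.toAddSubgroup).symm
  have hm0 : m ≠ 0 := by
    intro h; rw [h, zero_mul] at e1; exact h1 e1.symm
  rw [genIdx_def]
  simp only [rel]
  rw [← e1, ← e2]
  push_cast
  rw [mul_div_mul_left]
  exact_mod_cast hm0

theorem smul_le_of_forall {x : K} {A B : Submodule ℤ K} (h : ∀ a ∈ A, x * a ∈ B) :
    x • A ≤ B := by
  intro z hz
  obtain ⟨a, ha, hax⟩ := (hz : z ∈ x • (A : Set K))
  rw [← hax]; exact h a ha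

theorem isLat_smul {x : K} (hx : x ≠ 0) {A : Submodule ℤ K} (hA : IsLat A) :
    IsLat (x • A) := by
  constructor
  · exact Submodule.FG.map _ hA.1
  · have h1 : (↑(x • A) : Set K) = x • (A : Set K) := Submodule.coe_pointwise_smul x A
    rw [h1, Submodule.span_smul, hA.2]
    ext z
    simp only [Submodule.mem_top, iff_true]
    have : z ∈ x • ((⊤ : Submodule ℚ K) : Set K) := ⟨x⁻¹ * z, trivial, by
      show x * (x⁻¹ * z) = z; rw [← mul_assoc, mul_inv_cancel₀ hx, one_mul]⟩
    exact this

theorem neBot_of_isLat {A : Submodule ℤ K} (hA : IsLat A) : A ≠ ⊥ := by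
  intro h
  have hsp := hA.2
  rw [h, Submodule.bot_coe, Submodule.span_zero_singleton] at hsp
  exact absurd hsp bot_ne_top

theorem exists_ne_zero_mem {A : Submodule ℤ K} (hA : A ≠ ⊥) : ∃ a ∈ A, a ≠ (0:K) := by
  by_contra h
  push_neg at h
  exact hA (by ext z; simp only [Submodule.mem_bot]; exact ⟨fun hz => h z hz, by rintro rfl; exact A.zero_mem⟩)

theorem isLat_mul {A B : Submodule ℤ K} (hA : IsLat A) (hB : IsLat B) : IsLat (A * B) := by
  constructor
  · exact Submodule.FG.mul hA.1 hB.1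
  · obtain ⟨a, haA, ha0⟩ := exists_ne_zero_mem (neBot_of_isLat hA)
    have hle : a • B ≤ A * B := by
      rw [← Submodule.span_singleton_mul]
      exact (mul_le_mul_left ((Submodule.span_le).2 (by simpa using haA)) _)
    have hfull := (isLat_smul ha0 hB).2
    apply top_unique
    rw [← hfull]
    exact Submodule.span_mono hle

theorem isLat_inter_aux3 {A B C : Submodule ℤ K} (hA : IsLat A) (hB : IsLat B) (hC : IsLat C) :
    ∃ D : Submodule ℤ K, IsLat D ∧ D ≤ A ∧ D ≤ B ∧ D ≤ C := by
  obtain ⟨d, hd, hdB⟩ := commensurable hA.1 hB.2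
  obtain ⟨e, he, heC⟩ := commensurable hA.1 hC.2
  refine ⟨((d * e : ℤ) : K) • A, isLat_smul (by exact_mod_cast mul_ne_zero hd he) hA, ?_, ?_, ?_⟩
  · apply smul_le_of_forall
    intro a ha
    have : ((d * e : ℤ) : K) * a = (d * e : ℤ) • a := by rw [zsmul_eq_mul]
    rw [this]; exact A.smul_mem _ ha
  · apply smul_le_of_forall
    intro a ha
    have : ((d * e : ℤ) : K) * a = e • ((d : K) * a) := by rw [zsmul_eq_mul]; push_cast; ring
    rw [this]; exact B.smul_mem _ (hdB a ha)
  · apply smul_le_of_forall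
    intro a ha
    have : ((d * e : ℤ) : K) * a = d • ((e : K) * a) := by rw [zsmul_eq_mul]; push_cast; ring
    rw [this]; exact C.smul_mem _ (heC a ha)

theorem genIdx_cocycle {A B C : Submodule ℤ K} (hA : IsLat A) (hB : IsLat B) (hC : IsLat C) :
    genIdx A B * genIdx B C = genIdx A C := by
  obtain ⟨D, hD, hDA, hDB, hDC⟩ := isLat_inter_aux3 hA hB hC
  have rA := rel_ne_zero hA hD
  have rB := rel_ne_zero hB hD
  have rC := rel_ne_zero hC hD
  rw [genIdx_eq_div hDA hDB rA rB, genIdx_eq_div hDB hDC rB rC, genIdx_eq_div hDA hDC rA rC]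
  have hb : ((rel D B : ℚ)) ≠ 0 := by exact_mod_cast rB
  field_simp

theorem genIdx_self (A : Submodule ℤ K) : genIdx A A = 1 := by
  rw [genIdx_def]
  rw [show rel A A = 1 from AddSubgroup.relIndex_self _]
  norm_num

theorem genIdx_ne_zero {A B : Submodule ℤ K} (hA : IsLat A) (hB : IsLat B) :
    genIdx A B ≠ 0 := by
  obtain ⟨D, hD, hDA, hDB, _⟩ := isLat_inter_aux3 hA hB hB
  rw [genIdx_eq_div hDA hDB (rel_ne_zero hA hD) (rel_ne_zero hB hD)]
  have h1 : ((rel D A : ℚ)) ≠ 0 := by exact_mod_cast rel_ne_zero hA hD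
  have h2 : ((rel D B : ℚ)) ≠ 0 := by exact_mod_cast rel_ne_zero hB hD
  exact div_ne_zero h1 h2

theorem genIdx_smul (x : K) (hx : x ≠ 0) (A B : Submodule ℤ K) :
    genIdx (x • A) (x • B) = genIdx A B := by
  rw [genIdx_def, genIdx_def, rel_smul x hx A B, rel_smul x hx B A]

theorem genIdx_of_le {A B : Submodule ℤ K} (hBA : B ≤ A) : genIdx A B = (rel B A : ℚ) := by
  rw [genIdx_def, show rel A B = 1 from AddSubgroup.relIndex_eq_one.2 (tle hBA)]
  norm_num

/-- independence of `⟦L : xL⟧` of the lattice `L`. -/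
theorem genIdx_smul_const {L L' : Submodule ℤ K} (hL : IsLat L) (hL' : IsLat L')
    {x : K} (hx : x ≠ 0) : genIdx L (x • L) = genIdx L' (x • L') := by
  have hxL := isLat_smul hx hL
  have hxL' := isLat_smul hx hL'
  have c1 : genIdx L L' * genIdx L' (x • L') = genIdx L (x • L') := genIdx_cocycle hL hL' hxL'
  have c2 : genIdx L (x • L') * genIdx (x • L') (x • L) = genIdx L (x • L) :=
    genIdx_cocycle hL hxL' hxL
  have c3 : genIdx (x • L') (x • L) = genIdx L' L := genIdx_smul x hx L' L
  have c4 : genIdx L L' * genIdx L' L = genIdx L L := genIdx_cocycle hL hL' hL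
  rw [genIdx_self] at c4
  calc genIdx L (x • L) = genIdx L (x • L') * genIdx (x • L') (x • L) := c2.symm
    _ = (genIdx L L' * genIdx L' (x • L')) * genIdx L' L := by rw [c1, c3]
    _ = (genIdx L L' * genIdx L' L) * genIdx L' (x • L') := by ring
    _ = genIdx L' (x • L') := by rw [c4, one_mul]


def subringOf (T : Submodule ℤ K) (hT1 : (1 : K) ∈ T) (hTmul : T * T ≤ T) : Subring K where
  carrier := (T : Set K)
  mul_mem' := fun ha hb => hTmul (Submodule.mul_mem_mul ha hb)
  one_mem' := hT1
  add_mem' := fun ha hb => T.add_mem ha hb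
  zero_mem' := T.zero_mem
  neg_mem' := fun ha => T.neg_mem ha

section Avoidance

variable (S : Subring K) (T : Submodule ℤ K) (hS : ∀ z : K, z ∈ S ↔ z ∈ T)

include hS

theorem subring_fg (hTfg : T.FG) : AddGroup.FG ↥S := by
  have h1 : T.toAddSubgroup.FG := (Submodule.fg_iff_addSubgroup_fg T).1 hTfg
  have h2 : AddGroup.FG ↥T.toAddSubgroup := (AddGroup.fg_iff_addSubgroup_fg _).2 h1
  let e : ↥T.toAddSubgroup ≃+ ↥S :=
    { toFun := fun a => ⟨a.1, (hS a.1).2 a.2⟩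
      invFun := fun a => ⟨a.1, (hS a.1).1 a.2⟩
      left_inv := fun a => rfl
      right_inv := fun a => rfl
      map_add' := fun a b => rfl }
  exact AddGroup.fg_of_surjective (f := e.toAddMonoidHom) e.surjective

set_option synthInstance.maxHeartbeats 400000 in
theorem quot_finite (hTfg : T.FG) (d : ℤ) (hd : d ≠ 0) (dS : ↥S) (hdS : (dS : K) = (d : K)) :
    Finite (↥S ⧸ Ideal.span {dS}) := by
  haveI : AddGroup.FG ↥S := subring_fg S T hS hTfg
  haveI : AddGroup.FG (↥S ⧸ Ideal.span {dS}) := by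
    exact AddGroup.fg_of_surjective (f := (Ideal.Quotient.mk (Ideal.span {dS})).toAddMonoidHom)
      Ideal.Quotient.mk_surjective
  apply AddCommGroup.finite_of_fg_torsion
  intro g
  rw [isOfFinAddOrder_iff_nsmul_eq_zero]
  refine ⟨d.natAbs, Int.natAbs_pos.2 hd, ?_⟩
  obtain ⟨r, rfl⟩ := Ideal.Quotient.mk_surjective (I := Ideal.span {dS}) g
  have h1 : (d.natAbs : ℤ) • r ∈ Ideal.span {dS} := by
    have hdr : (d : ℤ) • r ∈ Ideal.span {dS} := by
      have : (d : ℤ) • r = r * dS := by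
        apply Subtype.ext
        push_cast [hdS]
        rw [zsmul_eq_mul]
        ring
      rw [this]
      exact Ideal.mem_span_singleton.2 (dvd_mul_left dS r)
    rcases Int.natAbs_eq d with h | h
    · rw [← h]; exact hdr
    · rw [show (d.natAbs : ℤ) = -d by omega, neg_zsmul]
      exact (Ideal.span {dS}).neg_mem hdr
  have hmm : (d.natAbs • r : ↥S) ∈ Ideal.span {dS} := by
    rw [← natCast_zsmul]
    exact h1
  calc d.natAbs • Ideal.Quotient.mk (Ideal.span {dS}) r
      = Ideal.Quotient.mk (Ideal.span {dS}) (d.natAbs • r) :=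
        ((Ideal.Quotient.mk (Ideal.span {dS})).toAddMonoidHom.map_nsmul d.natAbs r).symm
    _ = 0 := Ideal.Quotient.eq_zero_iff_mem.2 hmm

theorem maximal_finite (hTfg : T.FG) (d : ℤ) (hd : d ≠ 0) (dS : ↥S) (hdS : (dS : K) = (d : K)) :
    {m : Ideal ↥S | m.IsMaximal ∧ Ideal.span {dS} ≤ m}.Finite := by
  haveI : Finite (↥S ⧸ Ideal.span {dS}) := quot_finite S T hS hTfg d hd dS hdS
  haveI : Finite (Ideal (↥S ⧸ Ideal.span {dS})) :=
    Finite.of_injective _ (SetLike.coe_injective (A := Ideal (↥S ⧸ Ideal.span {dS})))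
  apply Set.Finite.of_finite_image (f := Ideal.map (Ideal.Quotient.mk (Ideal.span {dS})))
  · exact Set.toFinite _
  · intro m hm m' hm' h
    have e1 := Ideal.comap_map_of_surjective (Ideal.Quotient.mk (Ideal.span {dS}))
      Ideal.Quotient.mk_surjective m
    have e2 := Ideal.comap_map_of_surjective (Ideal.Quotient.mk (Ideal.span {dS}))
      Ideal.Quotient.mk_surjective m'
    rw [← Ideal.mk_ker (I := Ideal.span {dS})] at hm hm'
    calc m = m ⊔ RingHom.ker (Ideal.Quotient.mk (Ideal.span {dS})) := (sup_eq_left.2 hm.2).symm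
      _ = Ideal.comap (Ideal.Quotient.mk (Ideal.span {dS})) (Ideal.map _ m) := e1.symm
      _ = Ideal.comap (Ideal.Quotient.mk (Ideal.span {dS})) (Ideal.map _ m') := by rw [h]
      _ = m' ⊔ RingHom.ker (Ideal.Quotient.mk (Ideal.span {dS})) := e2
      _ = m' := sup_eq_left.2 hm'.2

theorem key_not_mem (P Q : Submodule ℤ K) (hT1 : (1:K) ∈ T) (hPQ : P * Q = T)
    (hQP : ∀ q ∈ Q, ∀ p ∈ P, q * p ∈ T)
    (m : Ideal ↥S) (hm : m.IsMaximal) :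
    ∃ p ∈ P, ∃ q ∈ Q, ∀ r : ↥S, (r : K) = q * p → r ∉ m := by
  by_contra hcon
  push_neg at hcon
  have main : ∀ z : K, z ∈ P * Q → ∃ hz : z ∈ S, (⟨z, hz⟩ : ↥S) ∈ m := by
    intro z hz
    refine Submodule.mul_induction_on hz ?_ ?_
    · intro pp hpp qq hqq
      obtain ⟨r, hr, hrm⟩ := hcon pp hpp qq hqq
      have hzS : pp * qq ∈ S := by rw [mul_comm, ← hr]; exact r.2
      refine ⟨hzS, ?_⟩
      have : (⟨pp * qq, hzS⟩ : ↥S) = r := Subtype.ext (show pp * qq = (r:K) by rw [hr]; ring)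
      rw [this]; exact hrm
    · intro z₁ z₂ h₁ h₂
      obtain ⟨hz₁, hm₁⟩ := h₁
      obtain ⟨hz₂, hm₂⟩ := h₂
      exact ⟨S.add_mem hz₁ hz₂, m.add_mem hm₁ hm₂⟩
  have h1 : (1 : K) ∈ P * Q := by rw [hPQ]; exact hT1
  obtain ⟨h1S, h1m⟩ := main 1 h1
  have : (⟨(1:K), h1S⟩ : ↥S) = 1 := rfl
  rw [this] at h1m
  exact hm.ne_top ((Ideal.eq_top_iff_one _).2 h1m)

theorem avoidance (P Q : Submodule ℤ K)
    (hT1 : (1:K) ∈ T) (hTfg : T.FG)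
    (hTP : T * P ≤ P) (hTQ : T * Q ≤ Q) (hPQ : P * Q = T) (d : ℤ) (hd : d ≠ 0) :
    ∃ x ∈ Q, x ≠ 0 ∧ ∃ t ∈ T, ∃ j ∈ Submodule.span ℤ {x} * P, j + (d:K) * t = 1 := by
  classical
  have hQP : ∀ q ∈ Q, ∀ p ∈ P, q * p ∈ T := by
    intro q hq p hp
    rw [← hPQ]
    rw [mul_comm]
    exact Submodule.mul_mem_mul hq hp
  have hQ0 : ∃ q ∈ Q, q ≠ (0:K) := by
    by_contra h
    push_neg at h
    have hQbot : Q = ⊥ := by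
      ext z; simp only [Submodule.mem_bot]
      exact ⟨fun hz => h z hz, by rintro rfl; exact Q.zero_mem⟩
    rw [hQbot, Submodule.mul_bot] at hPQ
    have : (1:K) ∈ (⊥ : Submodule ℤ K) := hPQ ▸ hT1
    simpa using this
  have hdT : (d : K) ∈ T := by
    have := T.smul_mem d hT1
    rwa [zsmul_eq_mul, mul_one] at this
  set dS : ↥S := ⟨(d : K), (hS _).2 hdT⟩ with hdS
  set D : Ideal ↥S := Ideal.span {dS} with hD
  have hfin := maximal_finite S T hS hTfg d hd dS rfl
  set s : Finset (Ideal ↥S) := hfin.toFinset with hsdef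
  -- for each maximal over D pick p,q with q*p not in m
  have hps : ∀ i : {m // m ∈ s}, ∃ p ∈ P, ∃ q ∈ Q, ∀ r : ↥S, (r : K) = q * p → r ∉ i.1 :=
    fun i => key_not_mem S T hS P Q hT1 hPQ hQP i.1 (hfin.mem_toFinset.1 i.2).1
  choose p hp q hq hnot using hps
  -- CRT idempotents
  have hcop : Pairwise (Function.onFun IsCoprime fun j : {m // m ∈ s} => (j.1 : Ideal ↥S)) := by
    intro j j' hne
    refine Ideal.isCoprime_iff_sup_eq.2 ?_
    exact Ideal.IsMaximal.coprime_of_ne (hfin.mem_toFinset.1 j.2).1 (hfin.mem_toFinset.1 j'.2).1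
      (fun h => hne (Subtype.ext h))
  have hcrt : ∀ i : {m // m ∈ s}, ∃ e : ↥S, e - 1 ∈ i.1 ∧ ∀ j : {m // m ∈ s}, j ≠ i → e ∈ j.1 := by
    intro i
    obtain ⟨y, hy⟩ := Ideal.quotientInfToPiQuotient_surj hcop
      (fun j => if j = i then 1 else 0)
    obtain ⟨r, rfl⟩ := Ideal.Quotient.mk_surjective y
    refine ⟨r, ?_, ?_⟩
    · have := congrFun hy i
      rw [Ideal.quotientInfToPiQuotient_mk'] at this
      simp only [if_pos rfl] at this
      have h1 : Ideal.Quotient.mk (i.1 : Ideal ↥S) r = Ideal.Quotient.mk i.1 1 := by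
        rw [this]; rfl
      exact Ideal.Quotient.eq.1 h1
    · intro j hj
      have := congrFun hy j
      rw [Ideal.quotientInfToPiQuotient_mk'] at this
      rw [if_neg hj] at this
      exact Ideal.Quotient.eq_zero_iff_mem.1 this
  choose e he1 he2 using hcrt
  set x : K := ∑ i : {m // m ∈ s}, ((e i : ↥S) : K) * q i with hx
  have hxQ : x ∈ Q := by
    apply Submodule.sum_mem
    intro i _
    exact hTQ (Submodule.mul_mem_mul ((hS _).1 (e i).2) (hq i))
  have hJle : Submodule.span ℤ {x} * P ≤ T := by
    rw [Submodule.mul_le]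
    intro a ha pp hpp
    obtain ⟨c, rfl⟩ := Submodule.mem_span_singleton.1 ha
    have : c • x * pp = c • (x * pp) := by rw [smul_mul_assoc]
    rw [this]
    exact T.smul_mem c (hQP x hxQ pp hpp)
  have hTJ : T * (Submodule.span ℤ {x} * P) ≤ Submodule.span ℤ {x} * P := by
    rw [mul_left_comm]
    exact (mul_le_mul_right hTP _)
  set JR : Ideal ↥S :=
    { carrier := {r : ↥S | (r : K) ∈ Submodule.span ℤ {x} * P}
      add_mem' := by
        intro r1 r2 h1 h2
        show ((r1 + r2 : ↥S) : K) ∈ Submodule.span ℤ {x} * P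
        rw [Subring.coe_add]
        exact Submodule.add_mem _ h1 h2
      zero_mem' := by
        show (((0 : ↥S)) : K) ∈ Submodule.span ℤ {x} * P
        rw [ZeroMemClass.coe_zero]
        exact Submodule.zero_mem _
      smul_mem' := by
        intro c r hr
        have : ((c • r : ↥S) : K) = (c : K) * (r : K) := rfl
        show ((c • r : ↥S) : K) ∈ Submodule.span ℤ {x} * P
        rw [this]
        exact hTJ (Submodule.mul_mem_mul ((hS _).1 c.2) hr) } with hJR
  have hJRD : JR ⊔ D = ⊤ := by
    by_contra hne
    obtain ⟨m, hmax, hle⟩ := Ideal.exists_le_maximal _ hne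
    have hmS : m ∈ s := hfin.mem_toFinset.2 ⟨hmax, le_trans le_sup_right hle⟩
    set i : {m // m ∈ s} := ⟨m, hmS⟩ with hi
    have hxpT : x * p i ∈ T :=
      hJle (Submodule.mul_mem_mul (Submodule.mem_span_singleton_self x) (hp i))
    set rxp : ↥S := ⟨x * p i, (hS _).2 hxpT⟩ with hrxp
    have hrxpJR : rxp ∈ JR :=
      Submodule.mul_mem_mul (Submodule.mem_span_singleton_self x) (hp i)
    have hrxpm : rxp ∈ m := hle (Ideal.mem_sup_left hrxpJR)
    set rq : {m // m ∈ s} → ↥S := fun j => ⟨q j * p i, (hS _).2 (hQP _ (hq j) _ (hp i))⟩ with hrq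
    have hsum : rxp = ∑ j, (e j) * (rq j) := by
      apply Subtype.ext
      show x * p i = ((∑ j, (e j) * (rq j) : ↥S) : K)
      rw [AddSubmonoidClass.coe_finset_sum]
      rw [hx, Finset.sum_mul]
      apply Finset.sum_congr rfl
      intro j _
      show ((e j : ↥S) : K) * q j * p i = ((e j * rq j : ↥S) : K)
      rw [Subring.coe_mul]
      rw [hrq]
      rw [mul_assoc]
    have hsm : ∑ j ∈ Finset.univ.erase i, (e j) * (rq j) ∈ m := by
      apply Ideal.sum_mem
      intro j hj
      exact m.mul_mem_right (rq j) (he2 j i (Finset.ne_of_mem_erase hj).symm)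
    have hterm : e i * rq i ∈ m := by
      have h1 : e i * rq i + ∑ j ∈ Finset.univ.erase i, (e j) * (rq j) = ∑ j, (e j) * (rq j) := by
        exact Finset.add_sum_erase _ (fun j => e j * rq j) (Finset.mem_univ i)
      have h2 : (∑ j, (e j) * (rq j)) ∈ m := hsum ▸ hrxpm
      have := m.sub_mem h2 hsm
      rwa [← h1, add_sub_cancel_right] at this
    have hfinal : rq i ∈ m := by
      have h3 : (e i - 1) * rq i ∈ m := m.mul_mem_right (rq i) (he1 i)
      have h4 : e i * rq i - (e i - 1) * rq i = rq i := by ring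
      rw [← h4]
      exact m.sub_mem hterm h3
    exact hnot i (rq i) rfl hfinal
  have h1top : (1 : ↥S) ∈ JR ⊔ D := by rw [hJRD]; trivial
  obtain ⟨a, haJR, b, hbD, hab⟩ := Submodule.mem_sup.1 h1top
  obtain ⟨c, hc⟩ := Ideal.mem_span_singleton'.1 hbD
  have heq : (a : K) + (d : K) * (c : K) = 1 := by
    have := congrArg (Subtype.val) hab
    rw [← hc] at this
    simpa [mul_comm] using this
  by_cases hx0 : x = 0
  · -- degenerate case : d is invertible in T
    obtain ⟨q₀, hq₀Q, hq₀⟩ := hQ0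
    have haJR' : (a : K) ∈ Submodule.span ℤ {x} * P := haJR
    rw [hx0, Submodule.span_zero_singleton, Submodule.bot_mul] at haJR'
    have ha0 : (a : K) = 0 := haJR'
    refine ⟨q₀, hq₀Q, hq₀, (c:K), (hS _).1 c.2, 0, Submodule.zero_mem _, ?_⟩
    rw [ha0] at heq
    rw [zero_add] at heq ⊢
    exact heq
  · exact ⟨x, hxQ, hx0, (c:K), (hS _).1 c.2, (a:K), haJR, heq⟩

end Avoidance


theorem tsup (A B : Submodule ℤ K) :
    (A ⊔ B).toAddSubgroup = A.toAddSubgroup ⊔ B.toAddSubgroup := by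
  apply le_antisymm
  · intro z hz
    obtain ⟨a, ha, b, hb, rfl⟩ := Submodule.mem_sup.1 hz
    exact AddSubgroup.add_mem _ (AddSubgroup.mem_sup_left ha) (AddSubgroup.mem_sup_right hb)
  · exact sup_le (tle le_sup_left) (tle le_sup_right)

theorem tinf (A B : Submodule ℤ K) :
    (A ⊓ B).toAddSubgroup = A.toAddSubgroup ⊓ B.toAddSubgroup := rfl

/-- The key nesting lemma: if `J` is coprime to the conductor-denominator `d`
of `M ≤ N`, then `[M : JM] = [N : JN]`. -/
theorem nest {T J M N : Submodule ℤ K} (hJT : J ≤ T)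
    (hTM : T * M ≤ M) (hTN : T * N ≤ N) (hMN : M ≤ N) (d : ℤ)
    (hdN : ∀ n ∈ N, (d : K) * n ∈ M)
    (hco : ∃ t ∈ T, ∃ j ∈ J, j + (d : K) * t = 1) :
    genIdx M (J * M) = genIdx N (J * N) := by
  obtain ⟨t, ht, j0, hj0, heq⟩ := hco
  have hJM_le_M : J * M ≤ M := le_trans ((mul_le_mul_left hJT _)) hTM
  have hJN_le_N : J * N ≤ N := le_trans ((mul_le_mul_left hJT _)) hTN
  have hdJN : ∀ w ∈ J * N, (d : K) * w ∈ J * M := by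
    intro w hw
    refine Submodule.mul_induction_on hw ?_ ?_
    · intro j hj n hn
      have : (d:K) * (j * n) = j * ((d:K) * n) := by ring
      rw [this]
      exact Submodule.mul_mem_mul hj (hdN n hn)
    · intro w₁ w₂ h₁ h₂
      rw [mul_add]
      exact Submodule.add_mem _ h₁ h₂
  have hsup : M ⊔ J * N = N := by
    apply le_antisymm (sup_le hMN hJN_le_N)
    intro n hn
    have hdec : n = (d:K) * (t * n) + j0 * n := by linear_combination (-n) * heq
    rw [hdec]
    apply Submodule.add_mem
    · exact Submodule.mem_sup_left (hdN _ (hTN (Submodule.mul_mem_mul ht hn)))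
    · exact Submodule.mem_sup_right (Submodule.mul_mem_mul hj0 hn)
  have hinf : M ⊓ (J * N) = J * M := by
    apply le_antisymm
    · rintro z ⟨hzM, hzJN⟩
      have hdec : z = j0 * z + (d:K) * (t * z) := by linear_combination (-z) * heq
      rw [hdec]
      apply Submodule.add_mem
      · exact Submodule.mul_mem_mul hj0 hzM
      · apply hdJN
        have htz : t * z ∈ J * N := by
          have : T * (J * N) ≤ J * N := by
            rw [mul_left_comm]
            exact (mul_le_mul_right hTN _)
          exact this (Submodule.mul_mem_mul ht hzJN)
        exact htz
    · exact le_inf hJM_le_M ((mul_le_mul_right hMN _))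
  rw [genIdx_of_le hJM_le_M, genIdx_of_le hJN_le_N]
  congr 1
  show (J*M).toAddSubgroup.relIndex M.toAddSubgroup
      = (J*N).toAddSubgroup.relIndex N.toAddSubgroup
  have e1 : (J*M).toAddSubgroup = M.toAddSubgroup ⊓ (J*N).toAddSubgroup := by
    rw [← tinf, hinf]
  have e2 : N.toAddSubgroup = M.toAddSubgroup ⊔ (J*N).toAddSubgroup := by
    rw [← tsup, hsup]
  rw [e1, e2]
  rw [AddSubgroup.inf_relIndex_left]
  exact (AddSubgroup.relIndex_sup_right _ _).symm


theorem smul_stable {T A : Submodule ℤ K} (hTA : T * A ≤ A) (x : K) :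
    T * (x • A) ≤ x • A := by
  rw [← Submodule.span_singleton_mul, mul_left_comm]
  exact (mul_le_mul_right hTA _)

theorem smul_mul_smul_subm (a b : K) (A B : Submodule ℤ K) :
    (a • A) * (b • B) = (a * b) • (A * B) := by
  rw [← Submodule.span_singleton_mul, ← Submodule.span_singleton_mul,
    ← Submodule.span_singleton_mul, mul_mul_mul_comm, Submodule.span_mul_span,
    Set.singleton_mul_singleton]

theorem smul_mul_subm (a : K) (A B : Submodule ℤ K) :
    (a • A) * B = a • (A * B) := by
  rw [← Submodule.span_singleton_mul, mul_assoc, Submodule.span_singleton_mul]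

theorem mul_smul_subm (a : K) (A B : Submodule ℤ K) :
    A * (a • B) = a • (A * B) := by
  rw [mul_comm, smul_mul_subm, mul_comm]

theorem fg_of_le {A B : Submodule ℤ K} (hB : B.FG) (hAB : A ≤ B) : A.FG := by
  haveI : IsNoetherian ℤ ↥B := isNoetherian_of_fg_of_noetherian B hB
  have h1 : (A.comap B.subtype).FG := IsNoetherian.noetherian _
  have h2 : (A.comap B.subtype).map B.subtype = A := by
    rw [Submodule.map_comap_subtype]
    exact inf_eq_right.2 hAB
  rw [← h2]
  exact Submodule.FG.map _ h1

/-- A nonzero fractional `T`-ideal is a full lattice. -/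
theorem isLat_fractional {T A : Submodule ℤ K} (hTlat : IsLat T) (hA0 : A ≠ ⊥)
    (hTA : T * A ≤ A) (hfrac : ∃ d ∈ T, d ≠ 0 ∧ ∀ x ∈ A, d * x ∈ A ⊔ T ⊓ T → True) : True := trivial

theorem isLat_of_fractional {T A : Submodule ℤ K} (hTlat : IsLat T) (hA0 : A ≠ ⊥)
    (hTA : T * A ≤ A) (d : K) (hd0 : d ≠ 0) (hdA : ∀ x ∈ A, d * x ∈ T) : IsLat A := by
  constructor
  · have h1 : d • A ≤ T := smul_le_of_forall hdA
    have h2 : (d • A).FG := fg_of_le hTlat.1 h1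
    have h3 : A = d⁻¹ • (d • A) := by
      rw [smul_smul, inv_mul_cancel₀ hd0, one_smul]
    rw [h3]
    exact Submodule.FG.map _ h2
  · obtain ⟨a, haA, ha0⟩ := exists_ne_zero_mem hA0
    have hle : a • T ≤ A := by
      apply smul_le_of_forall
      intro t htT
      rw [mul_comm]
      exact hTA (Submodule.mul_mem_mul htT haA)
    have hfull := (isLat_smul ha0 hTlat).2
    apply top_unique
    rw [← hfull]
    exact Submodule.span_mono hle

/-- Main lemma, integral case: for `P ≤ T` invertible, `⟦M : PM⟧ = ⟦T : PT⟧`. -/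
theorem KL0 (T : Submodule ℤ K) (hT1 : (1:K) ∈ T) (hTmul : T * T ≤ T) (hTlat : IsLat T)
    (P Q : Submodule ℤ K) (hPlat : IsLat P) (hPle : P ≤ T) (hTP : T * P ≤ P) (hTQ : T * Q ≤ Q)
    (hPQ : P * Q = T) (M : Submodule ℤ K) (hM : IsLat M) (hTM : T * M ≤ M) :
    genIdx M (P * M) = genIdx T (P * T) := by
  obtain ⟨f, hf0, hfM⟩ := commensurable hM.1 hTlat.2
  have hfK : ((f : ℤ) : K) ≠ 0 := Int.cast_ne_zero.2 hf0
  set M' := ((f : ℤ) : K) • M with hM'def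
  have hM'le : M' ≤ T := smul_le_of_forall hfM
  have hM'lat : IsLat M' := isLat_smul hfK hM
  have hTM' : T * M' ≤ M' := smul_stable hTM _
  obtain ⟨d', hd'0, hd'⟩ := commensurable hTlat.1 hM'lat.2
  obtain ⟨x, hxQ, hx0, t, ht, j, hj, heq⟩ :=
    avoidance (subringOf T hT1 hTmul) T (fun z => Iff.rfl) P Q hT1 hTlat.1 hTP hTQ hPQ d' hd'0
  set J := Submodule.span ℤ {x} * P with hJdef
  have hJT : J ≤ T := by
    calc J ≤ Q * P := (mul_le_mul_left ((Submodule.span_le).2 (by simpa using hxQ)) _)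
    _ = P * Q := mul_comm Q P
    _ = T := hPQ
  have hnest : genIdx M' (J * M') = genIdx T (J * T) :=
    nest hJT hTM' hTmul hM'le d' hd' ⟨t, ht, j, hj, heq⟩
  have hJW : ∀ W : Submodule ℤ K, J * W = x • (P * W) := by
    intro W
    rw [hJdef, mul_assoc, Submodule.span_singleton_mul]
  have hPM'lat : IsLat (P * M') := isLat_mul hPlat hM'lat
  have hPTlat : IsLat (P * T) := isLat_mul hPlat hTlat
  have c1 : genIdx M' (J * M') = genIdx M' (P * M') * genIdx (P * M') (x • (P * M')) := by
    rw [hJW M']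
    exact (genIdx_cocycle hM'lat hPM'lat (isLat_smul hx0 hPM'lat)).symm
  have c2 : genIdx T (J * T) = genIdx T (P * T) * genIdx (P * T) (x • (P * T)) := by
    rw [hJW T]
    exact (genIdx_cocycle hTlat hPTlat (isLat_smul hx0 hPTlat)).symm
  have hc : genIdx (P * M') (x • (P * M')) = genIdx (P * T) (x • (P * T)) :=
    genIdx_smul_const hPM'lat hPTlat hx0
  have hcne : genIdx (P * T) (x • (P * T)) ≠ 0 :=
    genIdx_ne_zero hPTlat (isLat_smul hx0 hPTlat)
  have hMT : genIdx M' (P * M') = genIdx T (P * T) := by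
    rw [c1, c2, hc] at hnest
    exact mul_right_cancel₀ hcne hnest
  calc genIdx M (P * M)
      = genIdx (((f : ℤ) : K) • M) (((f : ℤ) : K) • (P * M)) :=
        (genIdx_smul _ hfK M (P * M)).symm
    _ = genIdx M' (P * M') := by rw [hM'def, mul_smul_subm]
    _ = genIdx T (P * T) := hMT

/-- Main lemma: for invertible fractional `P`, `⟦M : PM⟧` does not depend on `M`. -/
theorem KL (T : Submodule ℤ K) (hT1 : (1:K) ∈ T) (hTmul : T * T ≤ T) (hTlat : IsLat T)
    (P Q : Submodule ℤ K) (hPlat : IsLat P) (hTP : T * P ≤ P) (hTQ : T * Q ≤ Q)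
    (hPQ : P * Q = T) (M N : Submodule ℤ K) (hMlat : IsLat M) (hTM : T * M ≤ M)
    (hNlat : IsLat N) (hTN : T * N ≤ N) :
    genIdx M (P * M) = genIdx N (P * N) := by
  obtain ⟨e, he0, heP⟩ := commensurable hPlat.1 hTlat.2
  have heK : ((e : ℤ) : K) ≠ 0 := Int.cast_ne_zero.2 he0
  set P₁ := ((e : ℤ) : K) • P with hP₁def
  have hP₁le : P₁ ≤ T := smul_le_of_forall heP
  have hP₁lat : IsLat P₁ := isLat_smul heK hPlat
  set Q₁ := (((e : ℤ) : K))⁻¹ • Q with hQ₁def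
  have hP₁Q₁ : P₁ * Q₁ = T := by
    rw [hP₁def, hQ₁def, smul_mul_smul_subm, mul_inv_cancel₀ heK, one_smul]
    exact hPQ
  have h1 : genIdx M (P₁ * M) = genIdx T (P₁ * T) :=
    KL0 T hT1 hTmul hTlat P₁ Q₁ hP₁lat hP₁le (smul_stable hTP _) (smul_stable hTQ _)
      hP₁Q₁ M hMlat hTM
  have h2 : genIdx N (P₁ * N) = genIdx T (P₁ * T) :=
    KL0 T hT1 hTmul hTlat P₁ Q₁ hP₁lat hP₁le (smul_stable hTP _) (smul_stable hTQ _)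
      hP₁Q₁ N hNlat hTN
  have hPMlat : IsLat (P * M) := isLat_mul hPlat hMlat
  have hPNlat : IsLat (P * N) := isLat_mul hPlat hNlat
  have cM : genIdx M (P₁ * M)
      = genIdx M (P * M) * genIdx (P * M) (((e : ℤ) : K) • (P * M)) := by
    rw [hP₁def, smul_mul_subm]
    exact (genIdx_cocycle hMlat hPMlat (isLat_smul heK hPMlat)).symm
  have cN : genIdx N (P₁ * N)
      = genIdx N (P * N) * genIdx (P * N) (((e : ℤ) : K) • (P * N)) := by
    rw [hP₁def, smul_mul_subm]
    exact (genIdx_cocycle hNlat hPNlat (isLat_smul heK hPNlat)).symm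
  have hc : genIdx (P * M) (((e : ℤ) : K) • (P * M))
      = genIdx (P * N) (((e : ℤ) : K) • (P * N)) := genIdx_smul_const hPMlat hPNlat heK
  have hcne : genIdx (P * N) (((e : ℤ) : K) • (P * N)) ≠ 0 :=
    genIdx_ne_zero hPNlat (isLat_smul heK hPNlat)
  have final : genIdx M (P * M) * genIdx (P * N) (((e : ℤ) : K) • (P * N))
      = genIdx N (P * N) * genIdx (P * N) (((e : ℤ) : K) • (P * N)) := by
    calc genIdx M (P * M) * genIdx (P * N) (((e : ℤ) : K) • (P * N))
        = genIdx M (P * M) * genIdx (P * M) (((e : ℤ) : K) • (P * M)) := by rw [hc]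
      _ = genIdx M (P₁ * M) := cM.symm
      _ = genIdx T (P₁ * T) := h1
      _ = genIdx N (P₁ * N) := h2.symm
      _ = genIdx N (P * N) * genIdx (P * N) (((e : ℤ) : K) • (P * N)) := cN
  exact mul_right_cancel₀ hcne final

section IntLat

theorem intLat_one : (1 : K) ∈ intLat K := (integralClosure ℤ K).one_mem

theorem intLat_mul_le : intLat K * intLat K ≤ intLat K :=
  Submodule.mul_le.2 fun a ha b hb =>
    (integralClosure ℤ K).mul_mem (by exact ha) (by exact hb)

/-- the order `T` as a subalgebra. -/
def algOf (T : Submodule ℤ K) (hT1 : (1 : K) ∈ T) (hTmul : T * T ≤ T) : Subalgebra ℤ K :=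
  { (subringOf T hT1 hTmul).toSubsemiring with
    algebraMap_mem' := fun n => show ((n : ℤ) : K) ∈ (T : Set K) by
      have := T.smul_mem n hT1
      rwa [zsmul_eq_mul, mul_one] at this }

theorem le_intLat (T : Submodule ℤ K) (hT1 : (1 : K) ∈ T) (hTmul : T * T ≤ T) (hTfg : T.FG) :
    T ≤ intLat K := by
  intro z hz
  have halg : Subalgebra.toSubmodule (algOf T hT1 hTmul) = T := by
    ext w; exact Iff.rfl
  have : IsIntegral ℤ z :=
    IsIntegral.of_mem_of_fg (algOf T hT1 hTmul) (by rw [halg]; exact hTfg) z hz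
  exact this

theorem intLat_lat [NumberField K] : IsLat (intLat K) := by
  constructor
  · have hfin : Module.Finite ℤ (integralClosure ℤ K) :=
      IsIntegralClosure.finite ℤ ℚ K (integralClosure ℤ K)
    have := hfin.fg_top
    exact (Submodule.fg_top (Subalgebra.toSubmodule (integralClosure ℤ K))).1 this
  · apply top_unique
    intro z _
    have halg : IsAlgebraic ℤ z := by
      rw [IsFractionRing.isAlgebraic_iff ℤ ℚ K]
      exact Algebra.IsAlgebraic.isAlgebraic z
    obtain ⟨y, c, hc0, hcy⟩ : ∃ y : integralClosure ℤ K, ∃ c : ℤ, c ≠ 0 ∧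
        z * algebraMap ℤ K c = y := by
      obtain ⟨c, hc0, hci⟩ := halg.exists_integral_multiple
      exact ⟨⟨c • z, hci⟩, c, hc0, by simp [zsmul_eq_mul, mul_comm]⟩
    have hcK : ((c : ℤ) : K) ≠ 0 := Int.cast_ne_zero.2 hc0
    have hyO : (y : K) ∈ Submodule.span ℚ ((intLat K : Submodule ℤ K) : Set K) :=
      Submodule.subset_span y.2
    have hz : z = ((c : ℚ))⁻¹ • (y : K) := by
      rw [Rat.smul_def]
      push_cast
      rw [← hcy]
      have : (algebraMap ℤ K c) = ((c : ℤ) : K) := by simp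
      rw [this]
      field_simp
    rw [hz]
    exact Submodule.smul_mem _ _ hyO

end IntLat

end DiscrepancyAux

/-- for an order `T` of a number field `K`, a nonzero fractional
`T`-ideal `I`, and a projective (equivalently invertible) fractional `T`-ideal `P`,
the discrepancy satisfies `dis(P·I) = dis(I)`. -/
theorem discrepancy_mul_invertible
    (K : Type*) [Field K] [NumberField K] (T : Submodule ℤ K)
    (hT1 : (1 : K) ∈ T) (hTmul : T * T ≤ T) (hTfg : T.FG)
    (hTfull : Submodule.span ℚ (T : Set K) = ⊤)
    (I : Submodule ℤ K) (hI0 : I ≠ ⊥) (hTI : T * I ≤ I)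
    (hIfrac : ∃ d ∈ T, d ≠ 0 ∧ ∀ x ∈ I, d * x ∈ T)
    (P : Submodule ℤ K) (hP0 : P ≠ ⊥) (hTP : T * P ≤ P)
    (hPfrac : ∃ d ∈ T, d ≠ 0 ∧ ∀ x ∈ P, d * x ∈ T)
    (hPinv : ∃ Q : Submodule ℤ K, T * Q ≤ Q ∧ P * Q = T) :
    discrepancy T (P * I) = discrepancy T I := by
  classical
  obtain ⟨Q, hTQ, hPQ⟩ := hPinv
  obtain ⟨dI, hdIT, hdI0, hdII⟩ := hIfrac
  obtain ⟨dP, hdPT, hdP0, hdPP⟩ := hPfrac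
  have hTlat : DiscrepancyAux.IsLat T := ⟨hTfg, hTfull⟩
  have hIlat : DiscrepancyAux.IsLat I :=
    DiscrepancyAux.isLat_of_fractional hTlat hI0 hTI dI hdI0 hdII
  have hPlat : DiscrepancyAux.IsLat P :=
    DiscrepancyAux.isLat_of_fractional hTlat hP0 hTP dP hdP0 hdPP
  have hOlat : DiscrepancyAux.IsLat (intLat K) := DiscrepancyAux.intLat_lat
  have hTO : T ≤ intLat K := DiscrepancyAux.le_intLat T hT1 hTmul hTfg
  have hOIlat : DiscrepancyAux.IsLat (intLat K * I) :=
    DiscrepancyAux.isLat_mul hOlat hIlat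
  have hPIlat : DiscrepancyAux.IsLat (P * I) := DiscrepancyAux.isLat_mul hPlat hIlat
  have hPOIlat : DiscrepancyAux.IsLat (P * (intLat K * I)) :=
    DiscrepancyAux.isLat_mul hPlat hOIlat
  have hTOI : T * (intLat K * I) ≤ intLat K * I := by
    calc T * (intLat K * I) = (T * intLat K) * I := (mul_assoc _ _ _).symm
      _ ≤ (intLat K * intLat K) * I :=
          (mul_le_mul_left ((mul_le_mul_left hTO _)) _)
      _ ≤ intLat K * I := (mul_le_mul_left DiscrepancyAux.intLat_mul_le _)
  have key : genIdx I (P * I) = genIdx (intLat K * I) (P * (intLat K * I)) :=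
    DiscrepancyAux.KL T hT1 hTmul hTlat P Q hPlat hTP hTQ hPQ I (intLat K * I)
      hIlat hTI hOIlat hTOI
  have hcomm : intLat K * (P * I) = P * (intLat K * I) := mul_left_comm _ _ _
  have c2 : genIdx (intLat K) (intLat K * I) * genIdx (intLat K * I) (P * (intLat K * I))
      = genIdx (intLat K) (P * (intLat K * I)) :=
    DiscrepancyAux.genIdx_cocycle hOlat hOIlat hPOIlat
  have c3 : genIdx T I * genIdx I (P * I) = genIdx T (P * I) :=
    DiscrepancyAux.genIdx_cocycle hTlat hIlat hPIlat
  have hcI : genIdx I (P * I) ≠ 0 := DiscrepancyAux.genIdx_ne_zero hIlat hPIlat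
  unfold discrepancy
  rw [hcomm, ← c2, ← c3, ← key]
  rw [mul_div_mul_right _ _ hcI]
end

section
/- Let K be a number field, T an order of K with ring of integers O_K and conductor f. For every nonzero fractional T-ideal I, the discrepancy satisfies dis(I) ≤ [O_K : T] · [O_K : f]. -/
section Helpers

variable {K : Type*} [Field K] [CharZero K]

lemma clear_denom (Y : Submodule ℤ K) {x : K} (hx : x ∈ Submodule.span ℚ (Y : Set K)) :
    ∃ n : ℤ, n ≠ 0 ∧ n • x ∈ Y := by
  induction hx using Submodule.span_induction with
  | mem y hy => exact ⟨1, one_ne_zero, by simpa using hy⟩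
  | zero => exact ⟨1, one_ne_zero, by simp⟩
  | add a b _ _ iha ihb =>
    obtain ⟨m, hm, hma⟩ := iha
    obtain ⟨n, hn, hnb⟩ := ihb
    refine ⟨m * n, mul_ne_zero hm hn, ?_⟩
    have h : (m * n) • (a + b) = n • (m • a) + m • (n • b) := by
      rw [smul_add, smul_smul, smul_smul, mul_comm n m]
    rw [h]
    exact Y.add_mem (Y.smul_mem n hma) (Y.smul_mem m hnb)
  | smul q a _ ih =>
    obtain ⟨n, hn, hna⟩ := ih
    refine ⟨n * q.den, mul_ne_zero hn (by exact_mod_cast q.den_nz), ?_⟩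
    have h : (n * (q.den : ℤ)) • (q • a) = (q.num * n) • a := by
      rw [← Int.cast_smul_eq_zsmul ℚ (n * (q.den:ℤ)), smul_smul,
        ← Int.cast_smul_eq_zsmul ℚ (q.num * n)]
      congr 1
      push_cast
      rw [mul_assoc]
      rw [show (q.den : ℚ) * q = q.num by rw [mul_comm]; exact_mod_cast q.mul_den_eq_num]
      ring
    rw [h, mul_smul]
    exact Y.smul_mem _ hna

lemma exists_int_smul_le {X Y : Submodule ℤ K} (hX : X.FG)
    (hY : Submodule.span ℚ (Y : Set K) = ⊤) :
    ∃ m : ℤ, m ≠ 0 ∧ ∀ x ∈ X, m • x ∈ Y := by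
  obtain ⟨s, hs⟩ := hX
  have key : ∀ x : K, ∃ n : ℤ, n ≠ 0 ∧ n • x ∈ Y := fun x =>
    clear_denom Y (by rw [hY]; trivial)
  -- take product over the finset s
  have : ∃ m : ℤ, m ≠ 0 ∧ ∀ x ∈ s, m • x ∈ Y := by
    classical
    refine Finset.induction_on s ⟨1, one_ne_zero, by simp⟩ ?_
    rintro a t _ ⟨m, hm, hmem⟩
    obtain ⟨n, hn, hna⟩ := key a
    refine ⟨m * n, mul_ne_zero hm hn, ?_⟩
    intro x hx
    rcases Finset.mem_insert.mp hx with rfl | hx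
    · rw [mul_smul]; exact Y.smul_mem _ hna
    · rw [mul_comm, mul_smul]; exact Y.smul_mem _ (hmem x hx)
  obtain ⟨m, hm, hmem⟩ := this
  refine ⟨m, hm, ?_⟩
  intro x hx
  rw [← hs] at hx
  induction hx using Submodule.span_induction with
  | mem y hy => exact hmem y hy
  | zero => simp
  | add a b _ _ iha ihb => rw [smul_add]; exact Y.add_mem iha ihb
  | smul z a _ ih => rw [smul_comm]; exact Y.smul_mem z ih

lemma full_of_smul_le {X Y : Submodule ℤ K} {m : ℤ} (hm : m ≠ 0)
    (h : ∀ x ∈ X, m • x ∈ Y) (hX : Submodule.span ℚ (X : Set K) = ⊤) :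
    Submodule.span ℚ (Y : Set K) = ⊤ := by
  rw [eq_top_iff, ← hX, Submodule.span_le]
  intro x hx
  have : x = ((m : ℚ)⁻¹ * m) • x := by
    rw [inv_mul_cancel₀ (by exact_mod_cast hm), one_smul]
  rw [this, mul_smul]
  refine Submodule.smul_mem _ _ (Submodule.subset_span ?_)
  show (m : ℚ) • x ∈ (Y : Set K)
  rw [show (m : ℚ) • x = m • x from Int.cast_smul_eq_zsmul ℚ m x]
  exact h x hx

lemma relIndex_ne_zero {X Y : Submodule ℤ K} (hXY : X ≤ Y) (hY : Y.FG)
    (hX : Submodule.span ℚ (X : Set K) = ⊤) :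
    X.toAddSubgroup.relIndex Y.toAddSubgroup ≠ 0 := by
  obtain ⟨m, hm, hmem⟩ := exists_int_smul_le hY hX
  haveI h1 : AddGroup.FG ↥Y.toAddSubgroup :=
    (AddGroup.fg_iff_addSubgroup_fg _).mpr ((Submodule.fg_iff_addSubgroup_fg _).mp hY)
  haveI h2 : AddGroup.FG
      (↥Y.toAddSubgroup ⧸ X.toAddSubgroup.addSubgroupOf Y.toAddSubgroup) :=
    AddGroup.fg_of_surjective (QuotientAddGroup.mk'_surjective _)
  have htor : AddMonoid.IsTorsion
      (↥Y.toAddSubgroup ⧸ X.toAddSubgroup.addSubgroupOf Y.toAddSubgroup) := by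
    intro x
    induction x using QuotientAddGroup.induction_on with
    | H y =>
      refine isOfFinAddOrder_iff_nsmul_eq_zero.mpr ⟨m.natAbs, Int.natAbs_pos.mpr hm, ?_⟩
      rw [← QuotientAddGroup.mk_nsmul, QuotientAddGroup.eq_zero_iff,
        AddSubgroup.mem_addSubgroupOf]
      have hy : (y : K) ∈ Y := y.2
      have hmy : m • (y : K) ∈ X := hmem _ hy
      have : ((m.natAbs • y : ↥Y.toAddSubgroup) : K) = (m.natAbs : ℤ) • (y : K) := by
        rw [← natCast_zsmul]
        norm_cast
      rw [Submodule.mem_toAddSubgroup, this]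
      rcases Int.natAbs_eq m with h | h
      · rw [← h]; exact hmy
      · rw [show (m.natAbs : ℤ) = -m by omega, neg_smul]; exact X.neg_mem hmy
  haveI : Finite (↥Y.toAddSubgroup ⧸ X.toAddSubgroup.addSubgroupOf Y.toAddSubgroup) :=
    AddCommGroup.finite_of_fg_torsion _ htor
  exact AddSubgroup.index_ne_zero_of_finite

lemma fg_of_le' {X Y : Submodule ℤ K} (h : X ≤ Y) (hY : Y.FG) : X.FG := by
  haveI : Module.Finite ℤ ↥Y := Module.Finite.iff_fg.mpr hY
  haveI : IsNoetherian ℤ ↥Y := isNoetherian_of_isNoetherianRing_of_finite ℤ ↥Y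
  have h1 : Submodule.map Y.subtype (Submodule.comap Y.subtype X) = X := by
    rw [Submodule.map_comap_subtype, inf_eq_right.mpr h]
  rw [← h1]
  exact Submodule.FG.map _ (IsNoetherian.noetherian _)

lemma toAddSubgroup_inf (A B : Submodule ℤ K) :
    (A ⊓ B).toAddSubgroup = A.toAddSubgroup ⊓ B.toAddSubgroup := rfl

lemma genIdx_eq_div {A B C : Submodule ℤ K} (hCA : C ≤ A) (hCB : C ≤ B)
    (hA : A.FG) (hC : Submodule.span ℚ (C : Set K) = ⊤) :
    genIdx A B = (C.toAddSubgroup.relIndex A.toAddSubgroup : ℚ) /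
      (C.toAddSubgroup.relIndex B.toAddSubgroup : ℚ) := by
  set D := A ⊓ B with hD
  have hCD : C ≤ D := le_inf hCA hCB
  have hDA : D ≤ A := inf_le_left
  have hDB : D ≤ B := inf_le_right
  have hDfg : D.FG := fg_of_le' hDA hA
  have h1 : C.toAddSubgroup.relIndex D.toAddSubgroup * D.toAddSubgroup.relIndex A.toAddSubgroup
      = C.toAddSubgroup.relIndex A.toAddSubgroup :=
    AddSubgroup.relIndex_mul_relIndex _ _ _ ((Submodule.toAddSubgroup_le _ _).mpr hCD)
      ((Submodule.toAddSubgroup_le _ _).mpr hDA)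
  have h2 : C.toAddSubgroup.relIndex D.toAddSubgroup * D.toAddSubgroup.relIndex B.toAddSubgroup
      = C.toAddSubgroup.relIndex B.toAddSubgroup :=
    AddSubgroup.relIndex_mul_relIndex _ _ _ ((Submodule.toAddSubgroup_le _ _).mpr hCD)
      ((Submodule.toAddSubgroup_le _ _).mpr hDB)
  have hCD0 : (C.toAddSubgroup.relIndex D.toAddSubgroup : ℚ) ≠ 0 := by
    exact_mod_cast relIndex_ne_zero hCD hDfg hC
  have e1 : B.toAddSubgroup.relIndex A.toAddSubgroup = D.toAddSubgroup.relIndex A.toAddSubgroup := by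
    rw [hD, toAddSubgroup_inf, inf_comm, AddSubgroup.inf_relIndex_right]
  have e2 : A.toAddSubgroup.relIndex B.toAddSubgroup = D.toAddSubgroup.relIndex B.toAddSubgroup := by
    rw [hD, toAddSubgroup_inf, AddSubgroup.inf_relIndex_right]
  rw [genIdx, e1, e2, ← h1, ← h2]
  push_cast
  rw [mul_div_mul_left _ _ hCD0]

end Helpers

/-- for an order `T` of a number field `K` with conductor
`f = {a ∈ K : a·O_K ⊆ T} = T / O_K`, every nonzero fractional `T`-ideal `I`
satisfies `dis(I) ≤ [O_K : T] · [O_K : f]`. -/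
theorem discrepancy_le_index_mul_index_conductor
    (K : Type*) [Field K] [NumberField K] (T : Submodule ℤ K)
    (hT1 : (1 : K) ∈ T) (hTmul : T * T ≤ T) (hTfg : T.FG)
    (hTfull : Submodule.span ℚ (T : Set K) = ⊤)
    (I : Submodule ℤ K) (hI0 : I ≠ ⊥) (hTI : T * I ≤ I)
    (hIfrac : ∃ d ∈ T, d ≠ 0 ∧ ∀ x ∈ I, d * x ∈ T) :
    discrepancy T I ≤ genIdx (intLat K) T * genIdx (intLat K) (T / intLat K) := by
  classical
  set O : Submodule ℤ K := intLat K with hOdef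
  have hOmem : ∀ x : K, x ∈ O ↔ IsIntegral ℤ x := fun x => Iff.rfl
  have hO1 : (1 : K) ∈ O := (hOmem 1).mpr isIntegral_one
  have hOmul : ∀ x ∈ O, ∀ y ∈ O, x * y ∈ O := fun x hx y hy =>
    (hOmem _).mpr (((hOmem x).mp hx).mul ((hOmem y).mp hy))
  have hOfg : O.FG := by
    haveI : IsNoetherian ℤ ↥O := IsIntegralClosure.isNoetherian ℤ ℚ K (integralClosure ℤ K)
    exact Module.Finite.iff_fg.mp inferInstance
  -- T ≤ O
  set T' : Subalgebra ℤ K :=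
    { carrier := (T : Set K)
      mul_mem' := fun ha hb => hTmul (Submodule.mul_mem_mul ha hb)
      one_mem' := hT1
      add_mem' := fun ha hb => T.add_mem ha hb
      zero_mem' := T.zero_mem
      algebraMap_mem' := fun n => by
        show algebraMap ℤ K n ∈ (T : Set K)
        rw [Algebra.algebraMap_eq_smul_one]
        exact T.smul_mem n hT1 } with hT'def
  have hT'sub : Subalgebra.toSubmodule T' = T := by
    ext x; rfl
  have hTO : T ≤ O := by
    intro x hx
    exact (hOmem x).mpr (IsIntegral.of_mem_of_fg T' (hT'sub ▸ hTfg) x hx)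
  have hOfull : Submodule.span ℚ (O : Set K) = ⊤ := by
    rw [eq_top_iff, ← hTfull]
    exact Submodule.span_mono hTO
  -- the conductor
  set f : Submodule ℤ K := T / O with hfdef
  have hfT : f ≤ T := by
    intro x hx
    have := (Submodule.mem_div_iff_forall_mul_mem.mp hx) 1 hO1
    rwa [mul_one] at this
  have hfO : f ≤ O := le_trans hfT hTO
  have hffg : f.FG := fg_of_le' hfO hOfg
  obtain ⟨m, hm, hmO⟩ := exists_int_smul_le hOfg hTfull
  have hOf : ∀ x ∈ O, m • x ∈ f := by
    intro x hx
    rw [Submodule.mem_div_iff_forall_mul_mem]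
    intro y hy
    rw [smul_mul_assoc]
    exact hmO _ (hOmul x hx y hy)
  have hffull : Submodule.span ℚ (f : Set K) = ⊤ := full_of_smul_le hm hOf hOfull
  -- I is full
  obtain ⟨x₀, hx₀I, hx₀⟩ := Submodule.ne_bot_iff I |>.mp hI0
  have hIfull : Submodule.span ℚ (I : Set K) = ⊤ := by
    rw [eq_top_iff]
    intro z _
    have hsurj : Function.Surjective (LinearMap.mulRight ℚ x₀) := by
      intro w
      exact ⟨w * x₀⁻¹, by simp [LinearMap.mulRight_apply, mul_assoc,
        inv_mul_cancel₀ hx₀]⟩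
    have h1 : (⊤ : Submodule ℚ K) = Submodule.map (LinearMap.mulRight ℚ x₀) ⊤ := by
      rw [Submodule.map_top, LinearMap.range_eq_top.mpr hsurj]
    have h2 : Submodule.map (LinearMap.mulRight ℚ x₀) (Submodule.span ℚ (T : Set K))
        = Submodule.span ℚ ((LinearMap.mulRight ℚ x₀) '' (T : Set K)) :=
      Submodule.map_span _ _
    have h3 : Submodule.span ℚ ((LinearMap.mulRight ℚ x₀) '' (T : Set K))
        ≤ Submodule.span ℚ (I : Set K) := by
      apply Submodule.span_mono
      rintro _ ⟨t, ht, rfl⟩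
      exact hTI (Submodule.mul_mem_mul ht hx₀I)
    have : z ∈ (⊤ : Submodule ℚ K) := trivial
    rw [h1, ← hTfull, h2] at this
    exact h3 this
  -- I and M are FG
  obtain ⟨d, hdT, hd, hdI⟩ := hIfrac
  have hinj : Function.Injective (LinearMap.mulLeft ℤ d) := fun a b hab => by
    simpa [LinearMap.mulLeft_apply] using mul_left_cancel₀ hd hab
  have hIfg : I.FG := by
    apply Submodule.fg_of_fg_map_injective (LinearMap.mulLeft ℤ d) hinj
    apply fg_of_le' _ hOfg
    rintro _ ⟨x, hx, rfl⟩
    exact hTO (hdI x hx)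
  set M : Submodule ℤ K := O * I with hMdef
  have hIM : I ≤ M := by
    intro x hx
    simpa using Submodule.mul_mem_mul hO1 hx
  have hMfg : M.FG := by
    apply Submodule.fg_of_fg_map_injective (LinearMap.mulLeft ℤ d) hinj
    apply fg_of_le' _ hOfg
    rw [Submodule.map_le_iff_le_comap, hMdef]
    apply Submodule.mul_le.mpr
    intro a ha x hx
    show d * (a * x) ∈ O
    have h : d * (a * x) = a * (d * x) := by ring
    rw [h]
    exact hOmul a ha _ (hTO (hdI x hx))
  have hMfull : Submodule.span ℚ (M : Set K) = ⊤ := by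
    rw [eq_top_iff, ← hIfull]
    exact Submodule.span_mono hIM
  -- the common full sublattice C
  set C : Submodule ℤ K := f ⊓ I with hCdef
  have hCf : C ≤ f := inf_le_left
  have hCI : C ≤ I := inf_le_right
  have hCT : C ≤ T := le_trans hCf hfT
  have hCO : C ≤ O := le_trans hCT hTO
  have hCM : C ≤ M := le_trans hCI hIM
  obtain ⟨m', hm', hm'I⟩ := exists_int_smul_le hIfg hffull
  have hCfull : Submodule.span ℚ (C : Set K) = ⊤ :=
    full_of_smul_le hm' (fun x hx => Submodule.mem_inf.mpr ⟨hm'I x hx, I.smul_mem m' hx⟩) hIfull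
  -- indices
  set aO := C.toAddSubgroup.relIndex O.toAddSubgroup with haO
  set aT := C.toAddSubgroup.relIndex T.toAddSubgroup with haT
  set af := C.toAddSubgroup.relIndex f.toAddSubgroup with haf
  set aI := C.toAddSubgroup.relIndex I.toAddSubgroup with haI
  set aM := C.toAddSubgroup.relIndex M.toAddSubgroup with haM
  have eOM : genIdx O M = (aO : ℚ) / (aM : ℚ) := genIdx_eq_div hCO hCM hOfg hCfull
  have eTI : genIdx T I = (aT : ℚ) / (aI : ℚ) := genIdx_eq_div hCT hCI hTfg hCfull
  have eOT : genIdx O T = (aO : ℚ) / (aT : ℚ) := genIdx_eq_div hCO hCT hOfg hCfull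
  have eOf : genIdx O f = (aO : ℚ) / (af : ℚ) := genIdx_eq_div hCO hCf hOfg hCfull
  have hO0 : 0 < aO := Nat.pos_of_ne_zero (relIndex_ne_zero hCO hOfg hCfull)
  have hT0 : 0 < aT := Nat.pos_of_ne_zero (relIndex_ne_zero hCT hTfg hCfull)
  have hf0 : 0 < af := Nat.pos_of_ne_zero (relIndex_ne_zero hCf hffg hCfull)
  have hI0' : 0 < aI := Nat.pos_of_ne_zero (relIndex_ne_zero hCI hIfg hCfull)
  have hM0 : 0 < aM := Nat.pos_of_ne_zero (relIndex_ne_zero hCM hMfg hCfull)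
  -- aI ≤ aM
  have hIle : aI ≤ aM := by
    have h1 : aI * I.toAddSubgroup.relIndex M.toAddSubgroup = aM :=
      AddSubgroup.relIndex_mul_relIndex _ _ _ ((Submodule.toAddSubgroup_le _ _).mpr hCI)
        ((Submodule.toAddSubgroup_le _ _).mpr hIM)
    have h2 : I.toAddSubgroup.relIndex M.toAddSubgroup ≠ 0 :=
      relIndex_ne_zero hIM hMfg hIfull
    calc aI = aI * 1 := (mul_one _).symm
      _ ≤ aI * I.toAddSubgroup.relIndex M.toAddSubgroup :=
        Nat.mul_le_mul_left _ (Nat.one_le_iff_ne_zero.mpr h2)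
      _ = aM := h1
  -- af ≤ aO
  have hfle : af ≤ aO := by
    have h1 : af * f.toAddSubgroup.relIndex O.toAddSubgroup = aO :=
      AddSubgroup.relIndex_mul_relIndex _ _ _ ((Submodule.toAddSubgroup_le _ _).mpr hCf)
        ((Submodule.toAddSubgroup_le _ _).mpr hfO)
    have h2 : f.toAddSubgroup.relIndex O.toAddSubgroup ≠ 0 :=
      relIndex_ne_zero hfO hOfg hffull
    calc af = af * 1 := (mul_one _).symm
      _ ≤ af * f.toAddSubgroup.relIndex O.toAddSubgroup :=
        Nat.mul_le_mul_left _ (Nat.one_le_iff_ne_zero.mpr h2)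
      _ = aO := h1
  -- finish
  show genIdx O M / genIdx T I ≤ genIdx O T * genIdx O f
  rw [eOM, eTI, eOT, eOf]
  have qO : (0:ℚ) < aO := by exact_mod_cast hO0
  have qT : (0:ℚ) < aT := by exact_mod_cast hT0
  have qf : (0:ℚ) < af := by exact_mod_cast hf0
  have qI : (0:ℚ) < aI := by exact_mod_cast hI0'
  have qM : (0:ℚ) < aM := by exact_mod_cast hM0
  rw [div_div_div_comm, div_le_iff₀ (by positivity), mul_assoc]
  refine le_mul_of_one_le_right (by positivity) ?_
  have g1 : (1:ℚ) ≤ (aO : ℚ) / (af : ℚ) := (one_le_div qf).mpr (by exact_mod_cast hfle)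
  have g2 : (1:ℚ) ≤ (aM : ℚ) / (aI : ℚ) := (one_le_div qI).mpr (by exact_mod_cast hIle)
  exact le_trans g1 (le_mul_of_one_le_right (by positivity) g2)
end

section
/- Let K be a number field and T an order of K. If T is Gorenstein, then for every nonzero fractional T-ideal I, one has (I : I) = T if and only if I is invertible. -/
set_option maxHeartbeats 1000000


/-- The dual lattice `T^∨ = Hom_ℤ(T, ℤ)` of `T`, viewed inside `K` via the trace form:
`{a ∈ K : tr_{K/ℚ}(a·t) ∈ ℤ for all t ∈ T}`. -/
noncomputable def traceDual (K : Type*) [Field K] [NumberField K]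
    (T : Submodule ℤ K) : Submodule ℤ K where
  carrier := {a : K | ∀ t ∈ T, ∃ n : ℤ, Algebra.trace ℚ K (a * t) = (n : ℚ)}
  zero_mem' := fun t _ => ⟨0, by simp⟩
  add_mem' := by
    intro a b ha hb t ht
    obtain ⟨m, hm⟩ := ha t ht
    obtain ⟨n, hn⟩ := hb t ht
    exact ⟨m + n, by rw [add_mul, map_add, hm, hn]; push_cast; ring⟩
  smul_mem' := by
    intro z a ha t ht
    obtain ⟨n, hn⟩ := ha t ht
    exact ⟨z * n, by rw [smul_mul_assoc, map_zsmul, hn, zsmul_eq_mul]; push_cast; ring⟩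

section Aux

open Submodule LinearMap

variable {K : Type*} [Field K] [NumberField K]

lemma aux_mem_traceDual {T : Submodule ℤ K} {a : K} :
    a ∈ traceDual K T ↔ ∀ t ∈ T, ∃ n : ℤ, Algebra.trace ℚ K (a * t) = (n : ℚ) :=
  Iff.rfl

/-- A submodule contained in a f.g. submodule of `K` is f.g. -/
lemma aux_fg_of_le {M I : Submodule ℤ K} (hM : M.FG) (h : I ≤ M) : I.FG := by
  have : IsNoetherian ℤ M := isNoetherian_of_fg_of_noetherian M hM
  have h1 : (Submodule.comap M.subtype I).FG := IsNoetherian.noetherian _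
  have h2 := h1.map M.subtype
  rwa [Submodule.map_comap_subtype, inf_eq_right.mpr h] at h2

/-- A f.g. full `ℤ`-lattice in `K` is the `ℤ`-span of a `ℚ`-basis of `K`. -/
theorem aux_exists_basis (L : Submodule ℤ K) (hfg : L.FG)
    (hfull : Submodule.span ℚ (L : Set K) = ⊤) :
    ∃ (ι : Type) (_ : Finite ι) (b : Module.Basis ι ℚ K),
      Submodule.span ℤ (Set.range ⇑b) = L := by
  have : Module.Finite ℤ L := ⟨(Submodule.fg_top L).mpr hfg⟩
  have : NoZeroSMulDivisors ℤ L := by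
    constructor
    intro c x hcx
    rcases eq_or_ne c 0 with h | h
    · exact Or.inl h
    · right
      ext
      have : c • (x : K) = 0 := by exact_mod_cast congrArg (Submodule.subtype L) hcx
      simpa using (smul_eq_zero.mp this).resolve_left (by exact_mod_cast h)
  let b0 := (Module.Free.chooseBasis ℤ L).reindex
    (Fintype.equivFin (Module.Free.ChooseBasisIndex ℤ L))
  set n := Fintype.card (Module.Free.ChooseBasisIndex ℤ L) with hn
  set v : Fin n → K := fun i => (b0 i : K) with hv
  have hliZ : LinearIndependent ℤ v :=
    b0.linearIndependent.map' L.subtype (Submodule.ker_subtype L)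
  have hliQ : LinearIndependent ℚ v := (LinearIndependent.iff_fractionRing ℤ ℚ).mp hliZ
  have hspanZ : Submodule.span ℤ (Set.range v) = L := by
    have hvc : Set.range v = L.subtype '' Set.range ⇑b0 := by
      rw [show v = L.subtype ∘ ⇑b0 from rfl, Set.range_comp]
    rw [hvc, ← Submodule.map_span, b0.span_eq, Submodule.map_top, Submodule.range_subtype]
  have hspanQ : ⊤ ≤ Submodule.span ℚ (Set.range v) := by
    rw [← Submodule.span_span_of_tower ℤ, hspanZ, hfull]
  refine ⟨Fin n, inferInstance, Module.Basis.mk hliQ hspanQ, ?_⟩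
  rw [Module.Basis.coe_mk, hspanZ]

/-- The `traceDual` is the dual submodule with respect to the trace form. -/
lemma aux_traceDual_eq (T : Submodule ℤ K) :
    traceDual K T = (Algebra.traceForm ℚ K).dualSubmodule T := by
  ext a
  rw [aux_mem_traceDual, LinearMap.BilinForm.mem_dualSubmodule]
  refine forall₂_congr fun t ht => ?_
  simp only [Submodule.mem_one, Algebra.traceForm_apply, algebraMap_int_eq, eq_intCast]
  exact ⟨fun ⟨n, h⟩ => ⟨n, h.symm⟩, fun ⟨n, h⟩ => ⟨n, h.symm⟩⟩

/-- For a `T`-stable module `A`, `T^∨ / A` is the trace-form dual of `A`. -/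
lemma aux_div_eq_dual (T : Submodule ℤ K) (hT1 : (1 : K) ∈ T)
    (A : Submodule ℤ K) (hTA : T * A ≤ A) :
    traceDual K T / A = (Algebra.traceForm ℚ K).dualSubmodule A := by
  ext x
  rw [Submodule.mem_div_iff_forall_mul_mem, LinearMap.BilinForm.mem_dualSubmodule]
  constructor
  · intro h y hy
    obtain ⟨n, hn⟩ := aux_mem_traceDual.mp (h y hy) 1 hT1
    refine Submodule.mem_one.mpr ⟨n, ?_⟩
    rw [mul_one] at hn
    simp only [Algebra.traceForm_apply, algebraMap_int_eq, eq_intCast]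
    exact hn.symm
  · intro h y hy
    rw [aux_mem_traceDual]
    intro t ht
    have hy' : t * y ∈ A := hTA (Submodule.mul_mem_mul ht hy)
    obtain ⟨n, hn⟩ := Submodule.mem_one.mp (h _ hy')
    refine ⟨n, ?_⟩
    rw [show x * y * t = x * (t * y) by ring]
    simpa [Algebra.traceForm_apply] using hn.symm

/-- Double duality for f.g. full lattices, plus properties of the dual. -/
theorem aux_dual_dual (L : Submodule ℤ K) (hfg : L.FG)
    (hfull : Submodule.span ℚ (L : Set K) = ⊤) :
    (Algebra.traceForm ℚ K).dualSubmodule ((Algebra.traceForm ℚ K).dualSubmodule L) = L ∧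
      ((Algebra.traceForm ℚ K).dualSubmodule L).FG ∧
      Submodule.span ℚ (((Algebra.traceForm ℚ K).dualSubmodule L) : Set K) = ⊤ := by
  classical
  obtain ⟨ι, hι, b, hb⟩ := aux_exists_basis L hfg hfull
  have hnd := traceForm_nondegenerate ℚ K
  have hsymm : (Algebra.traceForm ℚ K).IsSymm := Algebra.traceForm_isSymm ℚ
  refine ⟨?_, ?_, ?_⟩
  · rw [← hb]
    exact LinearMap.BilinForm.dualSubmodule_dualSubmodule_of_basis _ hnd hsymm b
  · rw [← hb, LinearMap.BilinForm.dualSubmodule_span_of_basis _ hnd b]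
    exact Submodule.fg_span (Set.finite_range _)
  · rw [← hb, LinearMap.BilinForm.dualSubmodule_span_of_basis _ hnd b,
      Submodule.span_span_of_tower]
    exact Module.Basis.span_eq _

/-- If `A` is full and `x·A ⊆ C` for some `x ≠ 0`, then `C` is full. -/
lemma aux_full {x : K} (hx : x ≠ 0) {A C : Submodule ℤ K}
    (hA : Submodule.span ℚ (A : Set K) = ⊤) (h : ∀ a ∈ A, x * a ∈ C) :
    Submodule.span ℚ (C : Set K) = ⊤ := by
  rw [eq_top_iff]
  have hsurj : Function.Surjective (LinearMap.mulLeft ℚ x) := fun y =>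
    ⟨x⁻¹ * y, by rw [LinearMap.mulLeft_apply]; field_simp⟩
  rw [← LinearMap.range_eq_top.mpr hsurj, ← Submodule.map_top, ← hA, Submodule.map_span]
  refine Submodule.span_le.mpr ?_
  rintro _ ⟨a, ha, rfl⟩
  exact Submodule.subset_span (h a ha)

end Aux

/-- let `T` be an order of a number field `K` which is Gorenstein
(equivalently, the trace-form dual `T^∨` is an invertible `T`-module).  Then a
nonzero fractional `T`-ideal `I` satisfies `(I : I) = T` if and only if `I` is
invertible, i.e. `I·(T : I) = T`. -/
theorem gorenstein_multiplier_ring_eq_iff_invertible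
    (K : Type*) [Field K] [NumberField K] (T : Submodule ℤ K)
    (hT1 : (1 : K) ∈ T) (hTmul : T * T ≤ T) (hTfg : T.FG)
    (hTfull : Submodule.span ℚ (T : Set K) = ⊤)
    (hGor : traceDual K T * (T / traceDual K T) = T)
    (I : Submodule ℤ K) (hI0 : I ≠ ⊥) (hTI : T * I ≤ I)
    (hIfrac : ∃ d ∈ T, d ≠ 0 ∧ ∀ x ∈ I, d * x ∈ T) :
    I / I = T ↔ I * (T / I) = T := by
  classical
  set ω := traceDual K T with hωdef
  constructor
  · -- hard direction, uses Gorenstein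
    intro hMul
    obtain ⟨d, hdT, hd0, hdI⟩ := hIfrac
    obtain ⟨x0, hx0I, hx00⟩ := I.ne_bot_iff.mp hI0
    -- I is finitely generated
    have hIfg : I.FG := by
      refine aux_fg_of_le (hTfg.map (LinearMap.mulLeft ℤ d⁻¹)) fun x hx => ?_
      exact Submodule.mem_map.mpr ⟨d * x, hdI x hx, by
        rw [LinearMap.mulLeft_apply, inv_mul_cancel_left₀ hd0]⟩
    -- I is full
    have hIfull : Submodule.span ℚ (I : Set K) = ⊤ :=
      aux_full hx00 hTfull fun t ht => by
        rw [mul_comm]; exact hTI (Submodule.mul_mem_mul ht hx0I)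
    -- T · ω ⊆ ω
    have hTω : T * ω ≤ ω := by
      refine Submodule.mul_le.mpr fun t ht a ha => ?_
      rw [hωdef, aux_mem_traceDual]
      intro s hs
      obtain ⟨n, hn⟩ := aux_mem_traceDual.mp ha (t * s) (hTmul (Submodule.mul_mem_mul ht hs))
      exact ⟨n, by rw [show t * a * s = a * (t * s) by ring]; exact hn⟩
    -- I' := ω / I is the trace dual of I
    have hI' : ω / I = (Algebra.traceForm ℚ K).dualSubmodule I := aux_div_eq_dual T hT1 I hTI
    obtain ⟨hddI, hI'fg', hI'full'⟩ := aux_dual_dual I hIfg hIfull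
    have hI'fg : (ω / I).FG := by rw [hI']; exact hI'fg'
    have hI'full : Submodule.span ℚ ((ω / I : Submodule ℤ K) : Set K) = ⊤ := by
      rw [hI']; exact hI'full'
    -- T · (ω/I) ⊆ ω/I
    have hTI' : T * (ω / I) ≤ ω / I := by
      refine Submodule.mul_le.mpr fun t ht z hz => ?_
      rw [Submodule.mem_div_iff_forall_mul_mem]
      intro y hy
      have h1 : z * y ∈ ω := Submodule.mem_div_iff_forall_mul_mem.mp hz y hy
      have := hTω (Submodule.mul_mem_mul ht h1)
      rwa [show t * z * y = t * (z * y) by ring]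
    -- ω / (ω/I) = I
    have hωI' : ω / (ω / I) = I := by
      rw [aux_div_eq_dual T hT1 _ hTI', hI', hddI]
    -- J := I * (ω/I)
    have hx0ne : ∃ z ∈ ω / I, z ≠ (0 : K) := by
      refine (ω / I).ne_bot_iff.mp fun h => ?_
      rw [h] at hI'full
      simp only [Submodule.bot_coe, Submodule.span_empty] at hI'full
      · exact absurd hI'full (by simpa using (bot_ne_top : (⊥ : Submodule ℚ K) ≠ ⊤))
      done
    have hJfg : (I * (ω / I)).FG := hIfg.mul hI'fg
    have hJfull : Submodule.span ℚ ((I * (ω / I) : Submodule ℤ K) : Set K) = ⊤ :=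
      aux_full hx00 hI'full fun z hz => Submodule.mul_mem_mul hx0I hz
    have hJT : T * (I * (ω / I)) ≤ I * (ω / I) := by
      calc T * (I * (ω / I)) = (T * I) * (ω / I) := (mul_assoc _ _ _).symm
        _ ≤ I * (ω / I) := mul_le_mul' hTI le_rfl
    -- D J = ω / J = (ω/I)/(ω/I) = I/I = T
    have key1 : ω / (I * (ω / I)) = (ω / I) / (ω / I) := by
      ext x
      rw [Submodule.mem_div_iff_forall_mul_mem, Submodule.mem_div_iff_forall_mul_mem]
      constructor
      · intro h z hz
        rw [Submodule.mem_div_iff_forall_mul_mem]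
        intro y hy
        have := h (y * z) (Submodule.mul_mem_mul hy hz)
        rwa [show x * z * y = x * (y * z) by ring]
      · intro h w hw
        have hle : I * (ω / I) ≤ Submodule.comap (LinearMap.mulLeft ℤ x) ω := by
          refine Submodule.mul_le.mpr fun y hy z hz => ?_
          have h2 := Submodule.mem_div_iff_forall_mul_mem.mp (h z hz) y hy
          rw [Submodule.mem_comap, LinearMap.mulLeft_apply]
          rwa [show x * (y * z) = x * z * y by ring]
        simpa using hle hw
    have key2 : (ω / I) / (ω / I) = I / I := by
      ext x
      rw [Submodule.mem_div_iff_forall_mul_mem, Submodule.mem_div_iff_forall_mul_mem]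
      constructor
      · intro h y hy
        rw [← hωI', Submodule.mem_div_iff_forall_mul_mem]
        intro z hz
        have := Submodule.mem_div_iff_forall_mul_mem.mp (h z hz) y hy
        rwa [show x * y * z = x * z * y by ring]
      · intro h z hz
        rw [Submodule.mem_div_iff_forall_mul_mem]
        intro y hy
        have h2 : x * y ∈ ω / (ω / I) := hωI'.symm ▸ h y hy
        have := Submodule.mem_div_iff_forall_mul_mem.mp h2 z hz
        rwa [show x * z * y = x * y * z by ring]
    -- J = ω
    have hDJ : (Algebra.traceForm ℚ K).dualSubmodule (I * (ω / I)) = T := by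
      rw [← aux_div_eq_dual T hT1 _ hJT, key1, key2, hMul]
    have hJω : I * (ω / I) = ω := by
      rw [← (aux_dual_dual _ hJfg hJfull).1, hDJ, ← aux_traceDual_eq, hωdef]
    -- conclude
    refine le_antisymm (Submodule.mul_le.mpr fun y hy w hw => ?_) ?_
    · rw [mul_comm]; exact Submodule.mem_div_iff_forall_mul_mem.mp hw y hy
    · have hsub : (ω / I) * (T / ω) ≤ T / I := by
        refine Submodule.mul_le.mpr fun z hz u hu => ?_
        rw [Submodule.mem_div_iff_forall_mul_mem]
        intro y hy
        have h1 : z * y ∈ ω := Submodule.mem_div_iff_forall_mul_mem.mp hz y hy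
        have h2 := Submodule.mem_div_iff_forall_mul_mem.mp hu _ h1
        rwa [show z * u * y = u * (z * y) by ring]
      calc T = ω * (T / ω) := hGor.symm
        _ = (I * (ω / I)) * (T / ω) := by rw [hJω]
        _ = I * ((ω / I) * (T / ω)) := mul_assoc _ _ _
        _ ≤ I * (T / I) := mul_le_mul' le_rfl hsub
  · -- easy direction
    intro hInv
    refine le_antisymm ?_ ?_
    · intro x hx
      rw [Submodule.mem_div_iff_forall_mul_mem] at hx
      have hxT : I * (T / I) ≤ Submodule.comap (LinearMap.mulLeft ℤ x) T := by
        refine Submodule.mul_le.mpr fun y hy w hw => ?_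
        rw [Submodule.mem_comap, LinearMap.mulLeft_apply]
        have h2 := Submodule.mem_div_iff_forall_mul_mem.mp hw _ (hx y hy)
        rwa [show x * (y * w) = w * (x * y) by ring]
      have := hxT (hInv.symm ▸ hT1)
      rw [Submodule.mem_comap, LinearMap.mulLeft_apply, mul_one] at this
      exact this
    · intro t ht
      rw [Submodule.mem_div_iff_forall_mul_mem]
      intro y hy
      exact hTI (Submodule.mul_mem_mul ht hy)
end

section
/- Let G be a finite group of order n and exponent e, let V be the regular representation of G over a field k of characteristic zero, and let P(V) be its projectivization with the induced G-action. For each g ∈ G of order d and each primitive d-th root of unity ζ ∈ k̄, the point of P(V)(k̄) spanned by the vector Σ_{j=0}^{d-1} ζ^j [g^j] is fixed by g, and g acts on the fiber of O(t) over this point by multiplication by ζ^t. Consequently, if the G-linearized line bundle O(t) (with the linearization induced from the G-action on V) descends to P(V)/G, then e divides t. -/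
/-- let `G` be a finite group of exponent `e`, and consider the regular
representation `V = k[G]` over an algebraically closed field `k` of characteristic
zero, with right `G`-action `[h]·g = [hg]`.  For `g ∈ G` of order `d` and a primitive
`d`-th root of unity `ζ`, the vector `w = Σ_{j<d} ζ^j [g^j]` spans a `g`-stable line
(`w·g = ζ⁻¹ • w`, so `g` acts on the fiber of `O(t)` over the corresponding point of
`P(V)` by `ζ^t`).  Consequently, if the `G`-linearized bundle `O(t)` descends to
`P(V)/G` — i.e., by Kempf's criterion, every stabilizer acts trivially on fibers: for
every `g`-eigenvector `v` with `v·g = c • v` one has `c^t = 1` — then `e ∣ t`. -/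
theorem regular_rep_eigenvector_and_descent_implies_exponent_dvd
    (k : Type*) [Field k] [CharZero k] [IsAlgClosed k]
    (G : Type*) [Group G] [Fintype G] (t : ℕ) :
    (∀ (g : G) (ζ : k), IsPrimitiveRoot ζ (orderOf g) →
      (∑ j ∈ Finset.range (orderOf g),
          ζ ^ j • (MonoidAlgebra.single (g ^ j) (1 : k) : MonoidAlgebra k G)) *
        MonoidAlgebra.single g 1
      = ζ⁻¹ • ∑ j ∈ Finset.range (orderOf g),
          ζ ^ j • (MonoidAlgebra.single (g ^ j) (1 : k) : MonoidAlgebra k G)) ∧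
    ((∀ (g : G) (v : MonoidAlgebra k G) (c : k),
        v ≠ 0 → v * MonoidAlgebra.single g 1 = c • v → c ^ t = 1) →
      Monoid.exponent G ∣ t) := by
  have key : ∀ (g : G) (ζ : k), IsPrimitiveRoot ζ (orderOf g) →
      (∑ j ∈ Finset.range (orderOf g),
          ζ ^ j • (MonoidAlgebra.single (g ^ j) (1 : k) : MonoidAlgebra k G)) *
        MonoidAlgebra.single g 1
      = ζ⁻¹ • ∑ j ∈ Finset.range (orderOf g),
          ζ ^ j • (MonoidAlgebra.single (g ^ j) (1 : k) : MonoidAlgebra k G) := by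
    intro g ζ hζ
    set d := orderOf g with hd
    have hd0 : 0 < d := orderOf_pos g
    have hζd : ζ ^ d = 1 := hζ.pow_eq_one
    have hζ0 : ζ ≠ 0 := by
      intro h
      rw [h, zero_pow hd0.ne'] at hζd
      exact zero_ne_one hζd
    -- multiply both sides by ζ
    have hsmul : ∀ x y : MonoidAlgebra k G, ζ • x = ζ • y → x = y := by
      intro x y h
      have := congrArg (fun z => ζ⁻¹ • z) h
      simpa [smul_smul, inv_mul_cancel₀ hζ0] using this
    apply hsmul
    rw [smul_smul, mul_inv_cancel₀ hζ0, one_smul]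
    rw [Finset.sum_mul, Finset.smul_sum]
    have lhs : ∀ j ∈ Finset.range d,
        ζ • (ζ ^ j • (MonoidAlgebra.single (g ^ j) (1 : k) : MonoidAlgebra k G) *
          MonoidAlgebra.single g 1)
        = ζ ^ (j + 1) • (MonoidAlgebra.single (g ^ (j + 1)) (1 : k) : MonoidAlgebra k G) := by
      intro j _
      rw [smul_mul_assoc, MonoidAlgebra.single_mul_single, mul_one, smul_smul,
        ← pow_succ', pow_succ, pow_succ]
    rw [Finset.sum_congr rfl lhs]
    -- now Σ_{j<d} f (j+1) = Σ_{j<d} f j where f j = ζ^j • [g^j], using periodicity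
    have h1 : (∑ j ∈ Finset.range (d + 1),
          ζ ^ j • (MonoidAlgebra.single (g ^ j) (1 : k) : MonoidAlgebra k G))
        = (∑ j ∈ Finset.range d,
          ζ ^ (j + 1) • (MonoidAlgebra.single (g ^ (j + 1)) (1 : k) : MonoidAlgebra k G))
          + ζ ^ 0 • (MonoidAlgebra.single (g ^ 0) (1 : k) : MonoidAlgebra k G) :=
      Finset.sum_range_succ' _ d
    have h2 : (∑ j ∈ Finset.range (d + 1),
          ζ ^ j • (MonoidAlgebra.single (g ^ j) (1 : k) : MonoidAlgebra k G))
        = (∑ j ∈ Finset.range d,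
          ζ ^ j • (MonoidAlgebra.single (g ^ j) (1 : k) : MonoidAlgebra k G))
          + ζ ^ d • (MonoidAlgebra.single (g ^ d) (1 : k) : MonoidAlgebra k G) :=
      Finset.sum_range_succ _ d
    have hper : ζ ^ d • (MonoidAlgebra.single (g ^ d) (1 : k) : MonoidAlgebra k G)
        = ζ ^ 0 • (MonoidAlgebra.single (g ^ 0) (1 : k) : MonoidAlgebra k G) := by
      simp [hζd, hd, pow_orderOf_eq_one]
      exact hζd
    have := h1.symm.trans h2
    rw [hper] at this
    exact add_right_cancel this
  refine ⟨key, fun H => ?_⟩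
  apply Monoid.exponent_dvd_of_forall_pow_eq_one
  intro g
  rw [← orderOf_dvd_iff_pow_eq_one]
  set d := orderOf g with hd
  have hd0 : 0 < d := orderOf_pos g
  have : NeZero ((d : k)) := ⟨Nat.cast_ne_zero.mpr hd0.ne'⟩
  obtain ⟨ζ, hζ⟩ := HasEnoughRootsOfUnity.exists_primitiveRoot k d
  set w : MonoidAlgebra k G :=
    ∑ j ∈ Finset.range d, ζ ^ j • (MonoidAlgebra.single (g ^ j) (1 : k)) with hw
  have hwne : w ≠ 0 := by
    intro h
    have h1 : w.coeff 1 = 1 := by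
      rw [hw, MonoidAlgebra.coeff_sum, Finsupp.finset_sum_apply]
      rw [Finset.sum_eq_single 0]
      · simp
      · intro j hj hj0
        have : g ^ j ≠ 1 := by
          intro hgj
          have := orderOf_dvd_of_pow_eq_one hgj
          rw [← hd] at this
          exact hj0 (Nat.eq_zero_of_dvd_of_lt this (Finset.mem_range.mp hj))
        simp [Finsupp.single_apply, this]
      · simp [hd0]
    rw [h] at h1
    simp at h1
  have hζ0 : ζ ≠ 0 := by
    intro h
    have hζd : ζ ^ d = 1 := hζ.pow_eq_one
    rw [h, zero_pow hd0.ne'] at hζd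
    exact zero_ne_one hζd
  have heig := key g ζ hζ
  have hct := H g w ζ⁻¹ hwne heig
  rw [inv_pow, inv_eq_one] at hct
  exact hζ.dvd_of_pow_eq_one t hct
end
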